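/- arXiv:2204.08422 — 7 statements merged into one kernel-verified Lean document; each statement's English description precedes it below -/
import Mathlib

section
/- Let K be an algebraically closed field and {x_α}_{α∈A} a set of indeterminates with |K| > |A|. If i is a proper ideal of the polynomial ring K[x_α : α∈A], then i has a zero with all coordinates in K, i.e., there exists a point a ∈ K^A with p(a) = 0 for all p ∈ i. -/
/-- Lang's infinite-variable weak Nullstellensatz: Let `K` be an algebraically
closed field and `{x_α}_{α ∈ A}` a set of indeterminates with `|K| > |A|`. Every proper ideal of
`K[x_α : α ∈ A]` has a zero with all coordinates in `K`. -/
theorem stmt5 (K : Type u) [Field K] [IsAlgClosed K] (A : Type u)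
    (hcard : Cardinal.mk A < Cardinal.mk K)
    (i : Ideal (MvPolynomial A K)) (hi : i ≠ ⊤) :
    ∃ a : A → K, ∀ p ∈ i, MvPolynomial.eval a p = 0 := by
  obtain ⟨m, hm, him⟩ := Ideal.exists_le_maximal i hi
  haveI : m.IsMaximal := hm
  letI : Field (MvPolynomial A K ⧸ m) := Ideal.Quotient.field m
  haveI halg : Algebra.IsAlgebraic K (MvPolynomial A K ⧸ m) := by
    cases finite_or_infinite A with
    | inl _ =>
      have h := MvPolynomial.comp_C_integral_of_surjective_of_isJacobsonRing
        (Ideal.Quotient.mk m) Ideal.Quotient.mk_surjective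
      have : Algebra.IsIntegral K (MvPolynomial A K ⧸ m) := Algebra.isIntegral_def.mpr h
      exact Algebra.IsIntegral.isAlgebraic
    | inr _ =>
      by_contra hna
      rw [← Algebra.transcendental_iff_not_isAlgebraic] at hna
      obtain ⟨x, hx⟩ := Algebra.transcendental_def.mp hna
      have h1 : Cardinal.mk K ≤ Module.rank K (MvPolynomial A K ⧸ m) :=
        hx.linearIndependent_sub_inv.cardinal_le_rank
      have h2 : Module.rank K (MvPolynomial A K ⧸ m) ≤ Module.rank K (MvPolynomial A K) :=
        LinearMap.rank_le_of_surjective (Ideal.Quotient.mkₐ K m).toLinearMap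
          Ideal.Quotient.mk_surjective
      rw [MvPolynomial.rank_eq, Cardinal.mk_finsupp_nat,
        max_eq_left (Cardinal.aleph0_le_mk A)] at h2
      exact absurd (h1.trans h2) (not_le.mpr hcard)
  have hbij : Function.Bijective (algebraMap K (MvPolynomial A K ⧸ m)) :=
    ⟨(algebraMap K _).injective,
      IsAlgClosed.algebraMap_bijective_of_isIntegral.2⟩
  let e : K ≃ₐ[K] (MvPolynomial A K ⧸ m) := AlgEquiv.ofBijective (Algebra.ofId _ _) hbij
  let φ : MvPolynomial A K →ₐ[K] K := e.symm.toAlgHom.comp (Ideal.Quotient.mkₐ K m)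
  refine ⟨fun α => φ (MvPolynomial.X α), fun p hp => ?_⟩
  have hev : (MvPolynomial.aeval fun α => φ (MvPolynomial.X α) :
      MvPolynomial A K →ₐ[K] K) = φ :=
    MvPolynomial.algHom_ext fun α => by simp
  have h3 : MvPolynomial.eval (fun α => φ (MvPolynomial.X α)) p = φ p := by
    conv_lhs => rw [← MvPolynomial.coe_aeval_eq_eval]
    rw [hev]; rfl
  rw [h3]
  have h4 : Ideal.Quotient.mkₐ K m p = 0 := (Ideal.Quotient.eq_zero_iff_mem).mpr (him hp)
  show e.symm (Ideal.Quotient.mkₐ K m p) = 0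
  rw [h4, map_zero]
end

section
/- Let K be an algebraically closed field and A a finite set of indeterminates. Then a proper ideal i of K[x_α : α∈A] has an algebraic zero, i.e., a point a ∈ K^A annihilating all polynomials of i. -/
/-- classical weak Nullstellensatz: Let `K` be an algebraically closed field and
`A` a finite set of indeterminates. Then every proper ideal of `K[x_α : α ∈ A]` has an algebraic
zero, i.e. a point `a ∈ K^A` annihilating all polynomials of the ideal. -/
theorem stmt6 (K : Type u) [Field K] [IsAlgClosed K] (A : Type v) [Finite A]
    (i : Ideal (MvPolynomial A K)) (hi : i ≠ ⊤) :
    ∃ a : A → K, ∀ p ∈ i, MvPolynomial.eval a p = 0 := by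
  obtain ⟨m, hm, him⟩ := i.exists_le_maximal hi
  obtain ⟨x, hx⟩ := (MvPolynomial.isMaximal_iff_eq_vanishingIdeal_singleton (I := m)).mp hm
  exact ⟨x, fun p hp => (MvPolynomial.mem_vanishingIdeal_singleton_iff x p).mp (hx ▸ him hp)⟩
end

section
/- Let K ⊆ F be a field extension with K algebraically closed, and let A, B be finite dimensional K-algebras. Then A ⊗_K F ≅ B ⊗_K F as F-algebras if and only if A ≅ B as K-algebras. -/
open TensorProduct

noncomputable section Stmt12Aux

open MvPolynomial

namespace Stmt12Aux

variable {K : Type u} [Field K] {n m : ℕ}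

/-- Variables: entries of a matrix for `f : A → B` (inl) and for `g : B → A` (inr). -/
abbrev Var (n m : ℕ) := (Fin m × Fin n) ⊕ (Fin n × Fin m)

variable (c : Fin n → Fin n → Fin n → K) (d : Fin m → Fin m → Fin m → K)

def P1 (i j : Fin n) (k : Fin m) : MvPolynomial (Var n m) K :=
  (∑ l, C (c i j l) * X (Sum.inl (k, l))) -
    ∑ p, ∑ q, X (Sum.inl (p, i)) * X (Sum.inl (q, j)) * C (d p q k)

def P2 (n m : ℕ) (i k : Fin n) : MvPolynomial (Var n m) K :=
  (∑ p, X (Sum.inr (k, p)) * X (Sum.inl (p, i))) - C (if k = i then 1 else 0)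

def P3 (n m : ℕ) (j k : Fin m) : MvPolynomial (Var n m) K :=
  (∑ p, X (Sum.inl (k, p)) * X (Sum.inr (p, j))) - C (if k = j then 1 else 0)

def Sys : Set (MvPolynomial (Var n m) K) :=
  (Set.range fun t : Fin n × Fin n × Fin m => P1 c d t.1 t.2.1 t.2.2) ∪
    (Set.range fun t : Fin n × Fin n => P2 (K := K) n m t.1 t.2) ∪
    (Set.range fun t : Fin m × Fin m => P3 (K := K) n m t.1 t.2)

variable (R : Type v) [CommRing R] [Algebra K R]

/-- `x` is a solution of the system over `R`. -/
def Sol (x : Var n m → R) : Prop := ∀ p ∈ Sys c d, aeval x p = 0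

theorem sol_iff (x : Var n m → R) :
    Sol c d R x ↔
      (∀ (i j : Fin n) (k : Fin m),
          ∑ l, algebraMap K R (c i j l) * x (Sum.inl (k, l)) =
            ∑ p, ∑ q, x (Sum.inl (p, i)) * x (Sum.inl (q, j)) * algebraMap K R (d p q k)) ∧
      (∀ i k : Fin n,
          ∑ p, x (Sum.inr (k, p)) * x (Sum.inl (p, i)) = if k = i then 1 else 0) ∧
      (∀ j k : Fin m,
          ∑ p, x (Sum.inl (k, p)) * x (Sum.inr (p, j)) = if k = j then 1 else 0) := by
  constructor
  · intro h
    refine ⟨fun i j k => ?_, fun i k => ?_, fun j k => ?_⟩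
    · have := h _ (Or.inl (Or.inl ⟨(i, j, k), rfl⟩))
      simpa [P1, sub_eq_zero] using this
    · have := h _ (Or.inl (Or.inr ⟨(i, k), rfl⟩))
      simpa [P2, sub_eq_zero, apply_ite (algebraMap K R)] using this
    · have := h _ (Or.inr ⟨(j, k), rfl⟩)
      simpa [P3, sub_eq_zero, apply_ite (algebraMap K R)] using this
  · rintro ⟨h1, h2, h3⟩ p ((hp | hp) | hp)
    · obtain ⟨t, rfl⟩ := hp
      simp [P1, sub_eq_zero, h1 t.1 t.2.1 t.2.2]
    · obtain ⟨t, rfl⟩ := hp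
      simp [P2, sub_eq_zero, apply_ite (algebraMap K R), h2 t.1 t.2]
    · obtain ⟨t, rfl⟩ := hp
      simp [P3, sub_eq_zero, apply_ite (algebraMap K R), h3 t.1 t.2]

/-- Transferring a solution along `algebraMap K F`. -/
theorem sol_map (F : Type v) [Field F] [Algebra K F] {x : Var n m → K}
    (h : Sol c d K x) : Sol c d F fun v => algebraMap K F (x v) := by
  intro p hp
  have hx : aeval x p = 0 := h p hp
  have h2 := comp_aeval_apply (R := K) (f := x) (Algebra.ofId K F) p
  rw [hx, map_zero] at h2
  simpa [Algebra.ofId_apply] using h2.symm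

/-- Weak Nullstellensatz descent: a solution over some field extension gives one over `K`. -/
theorem sol_descent [IsAlgClosed K] (F : Type v) [Field F] [Algebra K F]
    (x : Var n m → F) (h : Sol c d F x) : ∃ y : Var n m → K, Sol c d K y := by
  set I : Ideal (MvPolynomial (Var n m) K) := Ideal.span (Sys c d) with hI
  have hne : I ≠ ⊤ := by
    intro htop
    have hle : I ≤ RingHom.ker (aeval x : MvPolynomial (Var n m) K →ₐ[K] F) := by
      rw [hI, Ideal.span_le]
      intro p hp
      simpa [RingHom.mem_ker] using h p hp
    have : (1 : MvPolynomial (Var n m) K) ∈ RingHom.ker (aeval x : _ →ₐ[K] F) :=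
      hle (htop ▸ Submodule.mem_top)
    simp [RingHom.mem_ker] at this
  obtain ⟨J, hJmax, hIJ⟩ := Ideal.exists_le_maximal I hne
  obtain ⟨y, rfl⟩ := (MvPolynomial.isMaximal_iff_eq_vanishingIdeal_singleton (I := J)).1 hJmax
  refine ⟨y, fun p hp => ?_⟩
  have hpJ : p ∈ MvPolynomial.vanishingIdeal K {y} := hIJ (Ideal.subset_span hp)
  exact (MvPolynomial.mem_vanishingIdeal_singleton_iff y p).1 hpJ

section Equiv

variable {R} {A' B' : Type w}
  [NonUnitalNonAssocRing A'] [Module R A'] [SMulCommClass R A' A'] [IsScalarTower R A' A']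
  [NonUnitalNonAssocRing B'] [Module R B'] [SMulCommClass R B' B'] [IsScalarTower R B' B']
  (α : Module.Basis (Fin n) R A') (β : Module.Basis (Fin m) R B')

theorem sum_comm₃ {M : Type*} [AddCommMonoid M] {ι₁ ι₂ ι₃ : Type*} [Fintype ι₁] [Fintype ι₂]
    [Fintype ι₃] (t : ι₁ → ι₂ → ι₃ → M) :
    ∑ p, ∑ q, ∑ k, t p q k = ∑ k, ∑ p, ∑ q, t p q k := by
  calc ∑ p, ∑ q, ∑ k, t p q k = ∑ p, ∑ k, ∑ q, t p q k :=
        Finset.sum_congr rfl fun p _ => Finset.sum_comm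
    _ = ∑ k, ∑ p, ∑ q, t p q k := Finset.sum_comm

theorem repr_sum_eq {ι : Type*} [Fintype ι] [DecidableEq ι] {M : Type*} [AddCommGroup M]
    [Module R M] (b : Module.Basis ι R M) (t : ι → R) (k : ι) :
    b.repr (∑ i, t i • b i) k = t k := by
  rw [map_sum]
  simp [Finsupp.single_apply]

theorem equiv_of_sol
    (hc : ∀ i j, α i * α j = ∑ l, algebraMap K R (c i j l) • α l)
    (hd : ∀ p q, β p * β q = ∑ k, algebraMap K R (d p q k) • β k)
    (x : Var n m → R) (hx : Sol c d R x) :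
    ∃ e : A' ≃ₗ[R] B', ∀ a b, e (a * b) = e a * e b := by
  obtain ⟨h1, h2, h3⟩ := (sol_iff c d R x).1 hx
  set f : A' →ₗ[R] B' := α.constr R fun i => ∑ k, x (Sum.inl (k, i)) • β k with hf
  set g : B' →ₗ[R] A' := β.constr R fun j => ∑ k, x (Sum.inr (k, j)) • α k with hg
  have hfα : ∀ i, f (α i) = ∑ k, x (Sum.inl (k, i)) • β k := fun i => α.constr_basis _ _ _
  have hgβ : ∀ j, g (β j) = ∑ k, x (Sum.inr (k, j)) • α k := fun j => β.constr_basis _ _ _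
  have hgf : g.comp f = LinearMap.id := by
    refine α.ext fun i => ?_
    rw [LinearMap.comp_apply, LinearMap.id_apply, hfα, map_sum]
    simp_rw [map_smul, hgβ, Finset.smul_sum, smul_smul]
    rw [Finset.sum_comm]
    simp_rw [← Finset.sum_smul]
    have hcoef : ∀ k : Fin n, (∑ p, x (Sum.inl (p, i)) * x (Sum.inr (k, p))) =
        if k = i then 1 else 0 := by
      intro k; rw [← h2 i k]; exact Finset.sum_congr rfl fun p _ => mul_comm _ _
    simp_rw [hcoef, ite_smul, one_smul, zero_smul]
    simp
  have hfg : f.comp g = LinearMap.id := by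
    refine β.ext fun j => ?_
    rw [LinearMap.comp_apply, LinearMap.id_apply, hgβ, map_sum]
    simp_rw [map_smul, hfα, Finset.smul_sum, smul_smul]
    rw [Finset.sum_comm]
    simp_rw [← Finset.sum_smul]
    have hcoef : ∀ k : Fin m, (∑ p, x (Sum.inr (p, j)) * x (Sum.inl (k, p))) =
        if k = j then 1 else 0 := by
      intro k; rw [← h3 j k]; exact Finset.sum_congr rfl fun p _ => mul_comm _ _
    simp_rw [hcoef, ite_smul, one_smul, zero_smul]
    simp
  refine ⟨LinearEquiv.ofLinear f g hfg hgf, fun a b => ?_⟩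
  have key : (LinearMap.mul R A').compr₂ f = (LinearMap.mul R B').compl₁₂ f f := by
    refine LinearMap.ext_basis α α fun i j => ?_
    rw [LinearMap.compr₂_apply, LinearMap.compl₁₂_apply, LinearMap.mul_apply',
      LinearMap.mul_apply']
    have hL : f (α i * α j) =
        ∑ k, (∑ l, algebraMap K R (c i j l) * x (Sum.inl (k, l))) • β k := by
      rw [hc, map_sum]
      simp_rw [map_smul, hfα, Finset.smul_sum, smul_smul]
      rw [Finset.sum_comm]
      simp_rw [← Finset.sum_smul]
    have hR : f (α i) * f (α j) =
        ∑ k, (∑ p, ∑ q, x (Sum.inl (p, i)) * x (Sum.inl (q, j)) *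
          algebraMap K R (d p q k)) • β k := by
      rw [hfα, hfα, Finset.sum_mul]
      simp_rw [Finset.mul_sum, smul_mul_smul_comm, hd, Finset.smul_sum, smul_smul,
        Finset.sum_smul]
      exact sum_comm₃ _
    rw [hL, hR]
    exact Finset.sum_congr rfl fun k _ => by rw [h1 i j k]
  exact LinearMap.congr_fun (LinearMap.congr_fun key a) b

theorem sol_of_equiv
    (hc : ∀ i j, α i * α j = ∑ l, algebraMap K R (c i j l) • α l)
    (hd : ∀ p q, β p * β q = ∑ k, algebraMap K R (d p q k) • β k)
    (e : A' ≃ₗ[R] B') (he : ∀ a b, e (a * b) = e a * e b) :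
    ∃ x : Var n m → R, Sol c d R x := by
  classical
  set x : Var n m → R := fun v =>
    Sum.rec (fun t => β.repr (e (α t.2)) t.1) (fun t => α.repr (e.symm (β t.2)) t.1) v with hxdef
  refine ⟨x, ?_⟩
  rw [sol_iff]
  have heα : ∀ i, e (α i) = ∑ k, x (Sum.inl (k, i)) • β k := fun i => (β.sum_repr _).symm
  have heβ : ∀ j, e.symm (β j) = ∑ k, x (Sum.inr (k, j)) • α k := fun j => (α.sum_repr _).symm
  refine ⟨fun i j k => ?_, fun i k => ?_, fun j k => ?_⟩
  · have hL : e (α i * α j) =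
        ∑ k', (∑ l, algebraMap K R (c i j l) * x (Sum.inl (k', l))) • β k' := by
      rw [hc, map_sum]
      simp_rw [map_smul, heα, Finset.smul_sum, smul_smul]
      rw [Finset.sum_comm]
      simp_rw [← Finset.sum_smul]
    have hR : e (α i * α j) =
        ∑ k', (∑ p, ∑ q, x (Sum.inl (p, i)) * x (Sum.inl (q, j)) *
          algebraMap K R (d p q k')) • β k' := by
      rw [he, heα i, heα j, Finset.sum_mul]
      simp_rw [Finset.mul_sum, smul_mul_smul_comm, hd, Finset.smul_sum, smul_smul,
        Finset.sum_smul]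
      exact sum_comm₃ _
    have := congrArg (fun v => β.repr v k) (hL.symm.trans hR)
    simpa only [repr_sum_eq] using this
  · have hid : (∑ k', (∑ p, x (Sum.inl (p, i)) * x (Sum.inr (k', p))) • α k') = α i := by
      conv_rhs => rw [← e.symm_apply_apply (α i), heα i, map_sum]
      simp_rw [map_smul, heβ, Finset.smul_sum, smul_smul]
      rw [Finset.sum_comm]
      simp_rw [← Finset.sum_smul]
    have hcoef := congrArg (fun v => α.repr v k) hid
    simp only [repr_sum_eq] at hcoef
    calc ∑ p, x (Sum.inr (k, p)) * x (Sum.inl (p, i))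
        = ∑ p, x (Sum.inl (p, i)) * x (Sum.inr (k, p)) :=
          Finset.sum_congr rfl fun p _ => mul_comm _ _
      _ = α.repr (α i) k := hcoef
      _ = if k = i then 1 else 0 := by simp [Finsupp.single_apply, eq_comm]
  · have hid : (∑ k', (∑ p, x (Sum.inr (p, j)) * x (Sum.inl (k', p))) • β k') = β j := by
      conv_rhs => rw [← e.apply_symm_apply (β j), heβ j, map_sum]
      simp_rw [map_smul, heα, Finset.smul_sum, smul_smul]
      rw [Finset.sum_comm]
      simp_rw [← Finset.sum_smul]
    have hcoef := congrArg (fun v => β.repr v k) hid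
    simp only [repr_sum_eq] at hcoef
    calc ∑ p, x (Sum.inl (k, p)) * x (Sum.inr (p, j))
        = ∑ p, x (Sum.inr (p, j)) * x (Sum.inl (k, p)) :=
          Finset.sum_congr rfl fun p _ => mul_comm _ _
      _ = β.repr (β j) k := hcoef
      _ = if k = j then 1 else 0 := by simp [Finsupp.single_apply, eq_comm]

end Equiv

end Stmt12Aux

end Stmt12Aux

/-- Let `K ⊆ F` be a field extension with `K` algebraically closed, and let `A`, `B`
be finite-dimensional (not necessarily associative or unital) `K`-algebras. Then
`A ⊗_K F ≅ B ⊗_K F` as `F`-algebras iff `A ≅ B` as `K`-algebras. Algebra isomorphisms of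
possibly nonassociative algebras are rendered as multiplicative linear equivalences. -/
theorem stmt12 (K F : Type u) [Field K] [IsAlgClosed K] [Field F] [Algebra K F]
    (A B : Type u)
    [NonUnitalNonAssocRing A] [Module K A] [SMulCommClass K A A] [IsScalarTower K A A]
    [NonUnitalNonAssocRing B] [Module K B] [SMulCommClass K B B] [IsScalarTower K B B]
    [FiniteDimensional K A] [FiniteDimensional K B] :
    (∃ e : (F ⊗[K] A) ≃ₗ[F] (F ⊗[K] B), ∀ x y, e (x * y) = e x * e y) ↔
      ∃ f : A ≃ₗ[K] B, ∀ x y, f (x * y) = f x * f y := by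
  classical
  let 𝒜 := Module.finBasis K A
  let ℬ := Module.finBasis K B
  let c : Fin (Module.finrank K A) → Fin (Module.finrank K A) → Fin (Module.finrank K A) → K :=
    fun i j l => 𝒜.repr (𝒜 i * 𝒜 j) l
  let d : Fin (Module.finrank K B) → Fin (Module.finrank K B) → Fin (Module.finrank K B) → K :=
    fun p q k => ℬ.repr (ℬ p * ℬ q) k
  have hcK : ∀ i j, 𝒜 i * 𝒜 j = ∑ l, algebraMap K K (c i j l) • 𝒜 l := by
    intro i j
    simp only [Algebra.algebraMap_self, RingHom.id_apply]
    exact (𝒜.sum_repr _).symm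
  have hdK : ∀ p q, ℬ p * ℬ q = ∑ k, algebraMap K K (d p q k) • ℬ k := by
    intro p q
    simp only [Algebra.algebraMap_self, RingHom.id_apply]
    exact (ℬ.sum_repr _).symm
  let αF : Module.Basis (Fin (Module.finrank K A)) F (F ⊗[K] A) := 𝒜.baseChange F
  let βF : Module.Basis (Fin (Module.finrank K B)) F (F ⊗[K] B) := ℬ.baseChange F
  have hcF : ∀ i j, αF i * αF j = ∑ l, algebraMap K F (c i j l) • αF l := by
    intro i j
    simp only [αF, Module.Basis.baseChange_apply]
    rw [Algebra.TensorProduct.tmul_mul_tmul, one_mul]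
    conv_lhs => rw [← 𝒜.sum_repr (𝒜 i * 𝒜 j)]
    rw [tmul_sum]
    exact Finset.sum_congr rfl fun l _ => by rw [tmul_smul, algebraMap_smul]
  have hdF : ∀ p q, βF p * βF q = ∑ k, algebraMap K F (d p q k) • βF k := by
    intro p q
    simp only [βF, Module.Basis.baseChange_apply]
    rw [Algebra.TensorProduct.tmul_mul_tmul, one_mul]
    conv_lhs => rw [← ℬ.sum_repr (ℬ p * ℬ q)]
    rw [tmul_sum]
    exact Finset.sum_congr rfl fun k _ => by rw [tmul_smul, algebraMap_smul]
  constructor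
  · rintro ⟨e, he⟩
    obtain ⟨x, hx⟩ := Stmt12Aux.sol_of_equiv c d αF βF hcF hdF e he
    obtain ⟨y, hy⟩ := Stmt12Aux.sol_descent c d F x hx
    exact Stmt12Aux.equiv_of_sol c d 𝒜 ℬ hcK hdK y hy
  · rintro ⟨f, hf⟩
    obtain ⟨x, hx⟩ := Stmt12Aux.sol_of_equiv c d 𝒜 ℬ hcK hdK f hf
    exact Stmt12Aux.equiv_of_sol c d αF βF hcF hdF _ (Stmt12Aux.sol_map c d F hx)
end

section
/- Let F₁ and F₂ be fields containing an algebraically closed field K, and let A, B be finite dimensional K-algebras. Then A ⊗_K F₁ ≅ B ⊗_K F₁ as F₁-algebras if and only if A ⊗_K F₂ ≅ B ⊗_K F₂ as F₂-algebras. -/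
open TensorProduct

universe u

theorem aux_exists_common_zero {K : Type*} [Field K] [IsAlgClosed K]
    {F : Type*} [Field F] [Algebra K F] {σ : Type*} [Finite σ]
    (S : Set (MvPolynomial σ K)) (x : σ → F)
    (hx : ∀ p ∈ S, MvPolynomial.aeval x p = 0) :
    ∃ y : σ → K, ∀ p ∈ S, MvPolynomial.eval y p = 0 := by
  have hIne : Ideal.span S ≠ ⊤ := by
    intro h
    have hker : Ideal.span S ≤ RingHom.ker (MvPolynomial.aeval x (R := K)).toRingHom := by
      rw [Ideal.span_le]
      intro p hp
      exact hx p hp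
    rw [h] at hker
    have : (1 : MvPolynomial σ K) ∈ RingHom.ker (MvPolynomial.aeval x (R := K)).toRingHom :=
      hker Submodule.mem_top
    simp [RingHom.mem_ker] at this
  obtain ⟨m, hm, hle⟩ := Ideal.exists_le_maximal _ hIne
  obtain ⟨y, hy⟩ := (MvPolynomial.isMaximal_iff_eq_vanishingIdeal_singleton (I := m)).mp hm
  refine ⟨y, fun p hp => ?_⟩
  have : p ∈ m := hle (Ideal.subset_span hp)
  rw [hy] at this
  exact (MvPolynomial.mem_vanishingIdeal_singleton_iff y p).mp this

section bil
variable {R A' B' : Type*} [CommRing R]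
    [NonUnitalNonAssocRing A'] [Module R A'] [SMulCommClass R A' A'] [IsScalarTower R A' A']
    [NonUnitalNonAssocRing B'] [Module R B'] [SMulCommClass R B' B'] [IsScalarTower R B' B']

theorem aux_mul_of_basis {ι : Type*} (a : Module.Basis ι R A') (f : A' →ₗ[R] B')
    (h : ∀ i j, f (a i * a j) = f (a i) * f (a j)) :
    ∀ x y : A', f (x * y) = f x * f y := by
  have := LinearMap.ext_basis a a (B := (LinearMap.mul R A').compr₂ f)
    (B' := ((LinearMap.mul R B').compl₁₂ f f)) (by
      intro i j
      simpa using h i j)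
  intro x y
  have := DFunLike.congr_fun (DFunLike.congr_fun this x) y
  simpa using this

omit [SMulCommClass R A' A'] [IsScalarTower R A' A'] in
theorem aux_mul_basis_iff {ι : Type*} [Fintype ι] [DecidableEq ι]
    (a : Module.Basis ι R A') (b : Module.Basis ι R B') (f : A' →ₗ[R] B') (i j : ι) :
    f (a i * a j) = f (a i) * f (a j) ↔
      ∀ l, (∑ k, a.repr (a i * a j) k * (LinearMap.toMatrix a b f) l k) =
        ∑ p, ∑ q, (LinearMap.toMatrix a b f) p i * (LinearMap.toMatrix a b f) q j *
          b.repr (b p * b q) l := by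
  have h1 : f (a i * a j) = ∑ k, a.repr (a i * a j) k • f (a k) := by
    conv_lhs => rw [← Module.Basis.sum_repr a (a i * a j)]
    rw [map_sum]
    simp only [map_smul]
  have h2 : ∀ m, f (a m) = ∑ p, (LinearMap.toMatrix a b f) p m • b p := by
    intro m
    conv_lhs => rw [← Module.Basis.sum_repr b (f (a m))]
    simp only [LinearMap.toMatrix_apply]
  have hL : ∀ l, b.repr (f (a i * a j)) l =
      ∑ k, a.repr (a i * a j) k * (LinearMap.toMatrix a b f) l k := by
    intro l
    rw [h1]
    simp only [map_sum, Finsupp.coe_finset_sum, Finset.sum_apply, map_smul, Finsupp.coe_smul,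
      Pi.smul_apply, smul_eq_mul, LinearMap.toMatrix_apply]
  have hR : ∀ l, b.repr (f (a i) * f (a j)) l =
      ∑ p, ∑ q, (LinearMap.toMatrix a b f) p i * (LinearMap.toMatrix a b f) q j *
        b.repr (b p * b q) l := by
    intro l
    conv_lhs => rw [h2 i, h2 j]
    rw [Finset.sum_mul]
    simp only [Finset.mul_sum, smul_mul_assoc, mul_smul_comm]
    rw [map_sum]
    simp only [map_sum, map_smul, Finsupp.coe_finset_sum, Finset.sum_apply, Finsupp.coe_smul,
      Pi.smul_apply, smul_eq_mul]
    refine Finset.sum_congr rfl fun p _ => Finset.sum_congr rfl fun q _ => ?_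
    ring
  rw [Module.Basis.ext_elem_iff b]
  apply forall_congr'
  intro l
  rw [hL, hR]
end bil

section key
variable (K : Type u) [Field K] [IsAlgClosed K]
    (F : Type u) [Field F] [Algebra K F]
    (A B : Type u)
    [NonUnitalNonAssocRing A] [Module K A] [SMulCommClass K A A] [IsScalarTower K A A]
    [NonUnitalNonAssocRing B] [Module K B] [SMulCommClass K B B] [IsScalarTower K B B]
    [FiniteDimensional K A] [FiniteDimensional K B]

set_option linter.unusedSectionVars false in
theorem aux_easy (f : A ≃ₗ[K] B) (hf : ∀ x y, f (x * y) = f x * f y) :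
    ∃ e : (F ⊗[K] A) ≃ₗ[F] (F ⊗[K] B), ∀ x y, e (x * y) = e x * e y := by
  refine ⟨f.baseChange K F A B, ?_⟩
  have htm : ∀ (p : F) (m : A), f.baseChange K F A B (p ⊗ₜ m) = p ⊗ₜ f m := fun p m => rfl
  intro x y
  induction x using TensorProduct.induction_on with
  | zero => simp [zero_mul]
  | add u v hu hv => rw [add_mul, map_add, hu, hv, map_add, add_mul]
  | tmul p m =>
    induction y using TensorProduct.induction_on with
    | zero => simp [mul_zero]
    | add u v hu hv => rw [mul_add, map_add, hu, hv, map_add, mul_add]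
    | tmul q m' =>
      rw [Algebra.TensorProduct.tmul_mul_tmul, htm, htm, htm,
        Algebra.TensorProduct.tmul_mul_tmul, hf]

theorem aux_hard (e : (F ⊗[K] A) ≃ₗ[F] (F ⊗[K] B)) (he : ∀ x y, e (x * y) = e x * e y) :
    ∃ f : A ≃ₗ[K] B, ∀ x y, f (x * y) = f x * f y := by
  classical
  have hn : Module.finrank K B = Module.finrank K A := by
    have h1 := e.finrank_eq
    rw [Module.finrank_baseChange, Module.finrank_baseChange] at h1
    exact h1.symm
  set n := Module.finrank K A with hn'
  let bA : Module.Basis (Fin n) K A := Module.finBasis K A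
  let bB : Module.Basis (Fin n) K B := Module.finBasisOfFinrankEq K B hn
  let α : Fin n → Fin n → Fin n → K := fun i j k => bA.repr (bA i * bA j) k
  let β : Fin n → Fin n → Fin n → K := fun p q l => bB.repr (bB p * bB q) l
  let P : Fin n → Fin n → Fin n → MvPolynomial (Option (Fin n × Fin n)) K := fun i j l =>
    (∑ k, MvPolynomial.C (α i j k) * MvPolynomial.X (some (l, k))) -
      ∑ p, ∑ q, MvPolynomial.X (some (p, i)) * MvPolynomial.X (some (q, j)) *
        MvPolynomial.C (β p q l)
  let D : MvPolynomial (Option (Fin n × Fin n)) K :=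
    (Matrix.of fun p q : Fin n => (MvPolynomial.X (some (p, q)) :
      MvPolynomial (Option (Fin n × Fin n)) K)).det
  let Q : MvPolynomial (Option (Fin n × Fin n)) K :=
    MvPolynomial.X (none : Option (Fin n × Fin n)) * D - 1
  let S : Set (MvPolynomial (Option (Fin n × Fin n)) K) :=
    insert Q (Set.range fun t : Fin n × Fin n × Fin n => P t.1 t.2.1 t.2.2)
  -- the F-point
  let bA' : Module.Basis (Fin n) F (F ⊗[K] A) := bA.baseChange F
  let bB' : Module.Basis (Fin n) F (F ⊗[K] B) := bB.baseChange F
  let M : Matrix (Fin n) (Fin n) F := LinearMap.toMatrix bA' bB' e.toLinearMap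
  have hdet : M.det ≠ 0 := (e.isUnit_det bA' bB').ne_zero
  let x : Option (Fin n × Fin n) → F := fun s => Option.elim s M.det⁻¹ (fun pq => M pq.1 pq.2)
  have hα : ∀ i j k, bA'.repr (bA' i * bA' j) k = algebraMap K F (α i j k) := by
    intro i j k
    simp only [bA', Module.Basis.baseChange_apply, Algebra.TensorProduct.tmul_mul_tmul,
      Module.Basis.baseChange_repr_tmul, one_mul]
    rw [Algebra.algebraMap_eq_smul_one]
  have hβ : ∀ p q l, bB'.repr (bB' p * bB' q) l = algebraMap K F (β p q l) := by
    intro p q l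
    simp only [bB', Module.Basis.baseChange_apply, Algebra.TensorProduct.tmul_mul_tmul,
      Module.Basis.baseChange_repr_tmul, one_mul]
    rw [Algebra.algebraMap_eq_smul_one]
  have hx : ∀ p ∈ S, MvPolynomial.aeval x p = 0 := by
    intro p hp
    have hD : MvPolynomial.aeval x D = M.det := by
      rw [show MvPolynomial.aeval x D = ((Matrix.of fun p q : Fin n =>
          (MvPolynomial.X (some (p, q)) : MvPolynomial (Option (Fin n × Fin n)) K)).map
          (MvPolynomial.aeval x)).det from RingHom.map_det _ _]
      congr 1
      ext p q
      simp [x, Matrix.map_apply]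
    rcases Set.mem_insert_iff.mp hp with rfl | ⟨⟨i, j, l⟩, rfl⟩
    · show MvPolynomial.aeval x Q = 0
      simp only [Q, map_sub, map_mul, map_one, hD, MvPolynomial.aeval_X]
      show x none * M.det - 1 = 0
      simp [x, inv_mul_cancel₀ hdet]
    · show MvPolynomial.aeval x (P i j l) = 0
      have key := (aux_mul_basis_iff bA' bB' e.toLinearMap i j).mp
        (by simpa using he (bA' i) (bA' j)) l
      simp only [hα, hβ] at key
      simp only [P, map_sub, map_sum, map_mul, MvPolynomial.aeval_C, MvPolynomial.aeval_X]
      rw [sub_eq_zero]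
      convert key using 2 <;> rfl
  obtain ⟨y, hy⟩ := aux_exists_common_zero S x hx
  let N : Matrix (Fin n) (Fin n) K := Matrix.of fun p q => y (some (p, q))
  have hDN : MvPolynomial.eval y D = N.det := by
    rw [show MvPolynomial.eval y D = ((Matrix.of fun p q : Fin n =>
        (MvPolynomial.X (some (p, q)) : MvPolynomial (Option (Fin n × Fin n)) K)).map
        (MvPolynomial.eval y)).det from RingHom.map_det _ _]
    congr 1
    ext p q
    simp [N, Matrix.map_apply]
  have hQ : y none * N.det = 1 := by
    have := hy Q (Set.mem_insert _ _)
    simp only [Q, map_sub, map_mul, map_one, hDN, MvPolynomial.eval_X] at this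
    exact sub_eq_zero.mp this
  have hNdet : IsUnit N.det := IsUnit.of_mul_eq_one (a := N.det) (y none) (by
    rw [mul_comm]; exact hQ)
  let f : A →ₗ[K] B := Matrix.toLin bA bB N
  have hfN : LinearMap.toMatrix bA bB f = N := LinearMap.toMatrix_toLin bA bB N
  have hone : ∀ i j, f (bA i * bA j) = f (bA i) * f (bA j) := by
    intro i j
    apply (aux_mul_basis_iff bA bB f i j).mpr
    intro l
    have hP := hy (P i j l) (Set.mem_insert_iff.mpr (Or.inr ⟨(i, j, l), rfl⟩))
    simp only [P, map_sub, map_sum, map_mul, MvPolynomial.eval_C, MvPolynomial.eval_X] at hP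
    rw [hfN]
    rw [sub_eq_zero] at hP
    convert hP using 2 <;> rfl
  have hmul := aux_mul_of_basis bA f hone
  have hgdet : IsUnit (LinearMap.toMatrix bA bB f).det := by rw [hfN]; exact hNdet
  refine ⟨LinearEquiv.ofIsUnitDet hgdet, ?_⟩
  intro u v
  have hco : ∀ z, LinearEquiv.ofIsUnitDet hgdet z = f z := by
    intro z
    exact DFunLike.congr_fun (LinearEquiv.coe_ofIsUnitDet hgdet) z
  rw [hco, hco, hco, hmul]
end key

/-- Let `F₁` and `F₂` be fields containing an algebraically closed field `K`, and
let `A`, `B` be finite-dimensional (not necessarily associative) `K`-algebras. Then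
`A ⊗_K F₁ ≅ B ⊗_K F₁` as `F₁`-algebras iff `A ⊗_K F₂ ≅ B ⊗_K F₂` as `F₂`-algebras. -/
theorem stmt14 (K F₁ F₂ : Type u) [Field K] [IsAlgClosed K]
    [Field F₁] [Algebra K F₁] [Field F₂] [Algebra K F₂]
    (A B : Type u)
    [NonUnitalNonAssocRing A] [Module K A] [SMulCommClass K A A] [IsScalarTower K A A]
    [NonUnitalNonAssocRing B] [Module K B] [SMulCommClass K B B] [IsScalarTower K B B]
    [FiniteDimensional K A] [FiniteDimensional K B] :
    (∃ e : (F₁ ⊗[K] A) ≃ₗ[F₁] (F₁ ⊗[K] B), ∀ x y, e (x * y) = e x * e y) ↔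
      ∃ e : (F₂ ⊗[K] A) ≃ₗ[F₂] (F₂ ⊗[K] B), ∀ x y, e (x * y) = e x * e y := by
  constructor
  · rintro ⟨e, he⟩
    obtain ⟨f, hf⟩ := aux_hard K F₁ A B e he
    exact aux_easy K F₂ A B f hf
  · rintro ⟨e, he⟩
    obtain ⟨f, hf⟩ := aux_hard K F₂ A B e he
    exact aux_easy K F₁ A B f hf
end

section
/- Let F₁ and F₂ be algebraically closed fields containing a field K, and let A, B be finite dimensional K-algebras. Then A ⊗_K F₁ ≅ B ⊗_K F₁ as F₁-algebras if and only if A ⊗_K F₂ ≅ B ⊗_K F₂ as F₂-algebras. -/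
open TensorProduct

universe u

def MatProp' {K : Type u} [Field K] {n : ℕ} (F : Type u) [Field F] [Algebra K F]
    (cA cB : Fin n → Fin n → Fin n → K) : Prop :=
  ∃ M : Matrix (Fin n) (Fin n) F, IsUnit M.det ∧
    ∀ i j k, ∑ l, algebraMap K F (cA i j l) * M k l
      = ∑ p, ∑ q, M p i * M q j * algebraMap K F (cB p q k)


section PolyTransfer

variable {K : Type u} [Field K]

/-- A system of polynomial equations over `K` solvable in some field extension is solvable in
any algebraically closed extension. -/
lemma poly_transfer {σ : Type} [Finite σ] (S : Set (MvPolynomial σ K))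
    (F₁ F₂ : Type u) [Field F₁] [Algebra K F₁] [Field F₂] [IsAlgClosed F₂] [Algebra K F₂]
    (h : ∃ x : σ → F₁, ∀ p ∈ S, MvPolynomial.aeval x p = 0) :
    ∃ x : σ → F₂, ∀ p ∈ S, MvPolynomial.aeval x p = 0 := by
  obtain ⟨x, hx⟩ := h
  have hI : Ideal.span S ≠ ⊤ := by
    intro htop
    have hle : Ideal.span S ≤ RingHom.ker (MvPolynomial.aeval x).toRingHom := by
      rw [Ideal.span_le]
      intro p hp
      exact hx p hp
    rw [htop, top_le_iff, Ideal.eq_top_iff_one, RingHom.mem_ker] at hle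
    simp at hle
  obtain ⟨J, hJmax, hIJ⟩ := Ideal.exists_le_maximal _ hI
  letI : J.IsMaximal := hJmax
  letI : Field (MvPolynomial σ K ⧸ J) := Ideal.Quotient.field J
  have hint : ((Ideal.Quotient.mk J).comp MvPolynomial.C).IsIntegral :=
    MvPolynomial.comp_C_integral_of_surjective_of_isJacobsonRing _ Ideal.Quotient.mk_surjective
  have halgmap : algebraMap K (MvPolynomial σ K ⧸ J)
      = (Ideal.Quotient.mk J).comp MvPolynomial.C := rfl
  have halg : Algebra.IsAlgebraic K (MvPolynomial σ K ⧸ J) := by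
    constructor
    intro y
    have : IsIntegral K y := by
      rw [IsIntegral, RingHom.IsIntegralElem, halgmap]
      exact hint y
    exact this.isAlgebraic
  haveI : NoZeroSMulDivisors K (MvPolynomial σ K ⧸ J) :=
    by haveI := Module.isTorsionFree_iff_algebraMap_injective.2 (algebraMap K (MvPolynomial σ K ⧸ J)).injective; infer_instance
  let φ : (MvPolynomial σ K ⧸ J) →ₐ[K] F₂ := IsAlgClosed.lift
  refine ⟨fun i => φ (Ideal.Quotient.mk J (MvPolynomial.X i)), fun p hp => ?_⟩
  have key : (MvPolynomial.aeval fun i => φ (Ideal.Quotient.mk J (MvPolynomial.X i))) p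
      = (φ.comp (Ideal.Quotient.mkₐ K J)) p := by
    conv_rhs => rw [MvPolynomial.aeval_unique (φ.comp (Ideal.Quotient.mkₐ K J))]
    rfl
  rw [key]
  have hp0 : Ideal.Quotient.mk J p = 0 :=
    (Ideal.Quotient.eq_zero_iff_mem).2 (hIJ (Ideal.subset_span hp))
  simp [hp0]

end PolyTransfer




section MatProp

variable {K : Type u} [Field K] {n : ℕ}

variable (cA cB : Fin n → Fin n → Fin n → K)

/-- The polynomial system encoding `MatProp`. -/
noncomputable def matSys : Set (MvPolynomial ((Fin n × Fin n) ⊕ Unit) K) :=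
  insert
    (MvPolynomial.X (Sum.inr ())
      * (Matrix.of fun k l : Fin n => MvPolynomial.X (R := K) (Sum.inl (k, l))).det - 1)
    {p | ∃ i j k, p = (∑ l, MvPolynomial.C (cA i j l) * MvPolynomial.X (Sum.inl (k, l)))
      - ∑ p, ∑ q, MvPolynomial.X (R := K) (Sum.inl (p, i)) * MvPolynomial.X (Sum.inl (q, j))
          * MvPolynomial.C (cB p q k)}

lemma matSys_iff (F : Type u) [Field F] [Algebra K F] :
    (∃ x : ((Fin n × Fin n) ⊕ Unit) → F, ∀ p ∈ matSys cA cB, MvPolynomial.aeval x p = 0) ↔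
      MatProp' F cA cB := by
  constructor
  · rintro ⟨x, hx⟩
    refine ⟨fun k l => x (Sum.inl (k, l)), ?_, ?_⟩
    · have h0 := hx _ (Set.mem_insert _ _)
      rw [map_sub, map_mul, map_one, sub_eq_zero] at h0
      have hdet : (MvPolynomial.aeval x)
          ((Matrix.of fun k l : Fin n => MvPolynomial.X (R := K) (Sum.inl (k, l))).det)
          = (Matrix.of fun k l : Fin n => x (Sum.inl (k, l))).det := by
        rw [AlgHom.map_det]
        congr 1
        ext k l
        simp [Matrix.map_apply]
      rw [hdet, MvPolynomial.aeval_X] at h0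
      exact IsUnit.of_mul_eq_one _ (by rw [mul_comm]; exact h0)
    · intro i j k
      have h0 := hx _ (Set.mem_insert_of_mem _ ⟨i, j, k, rfl⟩)
      rw [map_sub, sub_eq_zero] at h0
      simpa using h0
  · rintro ⟨M, hdet, heq⟩
    obtain ⟨u, hu⟩ := hdet
    refine ⟨Sum.elim (fun kl => M kl.1 kl.2) (fun _ => (↑u⁻¹ : F)), fun p hp => ?_⟩
    rcases hp with rfl | ⟨i, j, k, rfl⟩
    · have hdet : (MvPolynomial.aeval
          (Sum.elim (fun kl : Fin n × Fin n => M kl.1 kl.2) (fun _ : Unit => (↑u⁻¹ : F))))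
          ((Matrix.of fun k l : Fin n => MvPolynomial.X (R := K) (Sum.inl (k, l))).det)
          = M.det := by
        rw [AlgHom.map_det]
        congr 1
        ext k l
        simp [Matrix.map_apply]
      rw [map_sub, map_mul, map_one, hdet]
      simp only [MvPolynomial.aeval_X, Sum.elim_inr]
      rw [sub_eq_zero, ← hu]
      exact u.inv_mul
    · rw [map_sub, sub_eq_zero]
      simpa using heq i j k

end MatProp




section Iso

variable {K F : Type u} [Field K] [Field F] [Algebra K F]
variable {A B : Type u}
  [NonUnitalNonAssocRing A] [Module K A] [SMulCommClass K A A] [IsScalarTower K A A]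
  [NonUnitalNonAssocRing B] [Module K B] [SMulCommClass K B B] [IsScalarTower K B B]
variable {n : ℕ} (bA : Module.Basis (Fin n) K A) (bB : Module.Basis (Fin n) K B)

lemma repr_f_mul (f : (F ⊗[K] A) →ₗ[F] (F ⊗[K] B)) (i j k : Fin n) :
    (bB.baseChange F).repr (f ((bA.baseChange F) i * (bA.baseChange F) j)) k
      = ∑ l, algebraMap K F (bA.repr (bA i * bA j) l)
          * (bB.baseChange F).repr (f ((bA.baseChange F) l)) k := by
  have h1 : (bA.baseChange F) i * (bA.baseChange F) j
      = ∑ l, algebraMap K F (bA.repr (bA i * bA j) l) • (bA.baseChange F) l := by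
    rw [Module.Basis.baseChange_apply, Module.Basis.baseChange_apply, Algebra.TensorProduct.tmul_mul_tmul,
      one_mul]
    conv_lhs => rw [← Module.Basis.sum_repr bA (bA i * bA j)]
    rw [tmul_sum]
    refine Finset.sum_congr rfl fun l _ => ?_
    rw [tmul_smul, ← algebraMap_smul F, Module.Basis.baseChange_apply]
  rw [h1, map_sum, map_sum]
  simp only [map_smul, Finsupp.finset_sum_apply, Finsupp.smul_apply, smul_eq_mul]

lemma repr_mul_f (f : (F ⊗[K] A) →ₗ[F] (F ⊗[K] B)) (i j k : Fin n) :
    (bB.baseChange F).repr (f ((bA.baseChange F) i) * f ((bA.baseChange F) j)) k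
      = ∑ p, ∑ q, (bB.baseChange F).repr (f ((bA.baseChange F) i)) p
          * (bB.baseChange F).repr (f ((bA.baseChange F) j)) q
          * algebraMap K F (bB.repr (bB p * bB q) k) := by
  have hb : ∀ p q : Fin n, (bB.baseChange F).repr ((bB.baseChange F) p * (bB.baseChange F) q) k
      = algebraMap K F (bB.repr (bB p * bB q) k) := by
    intro p q
    rw [Module.Basis.baseChange_apply, Module.Basis.baseChange_apply, Algebra.TensorProduct.tmul_mul_tmul,
      one_mul, Module.Basis.baseChange_repr_tmul, Algebra.algebraMap_eq_smul_one]
  conv_lhs => rw [← Module.Basis.sum_repr (bB.baseChange F) (f ((bA.baseChange F) i)),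
    ← Module.Basis.sum_repr (bB.baseChange F) (f ((bA.baseChange F) j))]
  rw [Finset.sum_mul, map_sum, Finsupp.finset_sum_apply]
  refine Finset.sum_congr rfl fun p _ => ?_
  rw [Finset.mul_sum, map_sum, Finsupp.finset_sum_apply]
  refine Finset.sum_congr rfl fun q _ => ?_
  rw [smul_mul_assoc, mul_smul_comm, map_smul, map_smul, Finsupp.smul_apply, Finsupp.smul_apply,
    smul_eq_mul, smul_eq_mul, hb p q, mul_assoc]

end Iso

set_option linter.unusedSectionVars false

section Iso2
variable {K F : Type u} [Field K] [Field F] [Algebra K F]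
variable {A B : Type u}
  [NonUnitalNonAssocRing A] [Module K A] [SMulCommClass K A A] [IsScalarTower K A A]
  [NonUnitalNonAssocRing B] [Module K B] [SMulCommClass K B B] [IsScalarTower K B B]
variable {n : ℕ} (bA : Module.Basis (Fin n) K A) (bB : Module.Basis (Fin n) K B)

set_option maxRecDepth 8000 in
lemma iso_iff_matProp :
    (∃ e : (F ⊗[K] A) ≃ₗ[F] (F ⊗[K] B), ∀ x y, e (x * y) = e x * e y) ↔
      MatProp' F (fun i j k => bA.repr (bA i * bA j) k)
        (fun i j k => bB.repr (bB i * bB j) k) := by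
  constructor
  · rintro ⟨e, he⟩
    refine ⟨LinearMap.toMatrix (bA.baseChange F) (bB.baseChange F) e, e.isUnit_det _ _, ?_⟩
    intro i j k
    have h1 := repr_f_mul bA bB (e.toLinearMap) i j k
    have h2 := repr_mul_f bA bB (e.toLinearMap) i j k
    simp only [LinearMap.toMatrix_apply, LinearEquiv.coe_coe] at h1 h2 ⊢
    rw [← h1, ← h2, he]
  · rintro ⟨M, hdet, heq⟩
    set f := Matrix.toLin (bA.baseChange F) (bB.baseChange F) M with hf
    have hM : LinearMap.toMatrix (bA.baseChange F) (bB.baseChange F) f = M :=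
      LinearMap.toMatrix_toLin _ _ _
    have hdet' : IsUnit (LinearMap.toMatrix (bA.baseChange F) (bB.baseChange F) f).det := by
      rw [hM]; exact hdet
    have hrepr : ∀ k l, (bB.baseChange F).repr (f ((bA.baseChange F) l)) k = M k l := by
      intro k l
      rw [← LinearMap.toMatrix_apply, hM]
    have key : ∀ i j, f ((bA.baseChange F) i * (bA.baseChange F) j)
        = f ((bA.baseChange F) i) * f ((bA.baseChange F) j) := by
      intro i j
      apply (bB.baseChange F).ext_elem
      intro k
      rw [repr_f_mul bA bB f i j k, repr_mul_f bA bB f i j k]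
      simp only [hrepr]
      exact heq i j k
    refine ⟨LinearEquiv.ofIsUnitDet hdet', ?_⟩
    have hcoe : ∀ x, LinearEquiv.ofIsUnitDet hdet' x = f x := by
      intro x
      exact LinearMap.congr_fun (LinearEquiv.coe_ofIsUnitDet hdet') x
    intro x y
    let L₁ : (F ⊗[K] A) →ₗ[F] (F ⊗[K] A) →ₗ[F] (F ⊗[K] B) :=
      (LinearMap.mul F (F ⊗[K] A)).compr₂ f
    let L₂ : (F ⊗[K] A) →ₗ[F] (F ⊗[K] A) →ₗ[F] (F ⊗[K] B) :=
      ((LinearMap.mul F (F ⊗[K] B)).comp f).compl₂ f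
    have hbil : L₁ = L₂ := by
      refine Module.Basis.ext (bA.baseChange F) fun i => Module.Basis.ext (bA.baseChange F) fun j => ?_
      simp only [L₁, L₂, LinearMap.compr₂_apply, LinearMap.compl₂_apply, LinearMap.comp_apply,
        LinearMap.mul_apply']
      exact key i j
    have hxy := LinearMap.congr_fun (LinearMap.congr_fun hbil x) y
    simp only [L₁, L₂, LinearMap.compr₂_apply, LinearMap.compl₂_apply, LinearMap.comp_apply,
      LinearMap.mul_apply'] at hxy
    rw [hcoe, hcoe, hcoe]
    exact hxy

end Iso2

/-- Let `F₁` and `F₂` be algebraically closed fields containing a field `K`, and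
let `A`, `B` be finite-dimensional (not necessarily associative) `K`-algebras. Then
`A ⊗_K F₁ ≅ B ⊗_K F₁` as `F₁`-algebras iff `A ⊗_K F₂ ≅ B ⊗_K F₂` as `F₂`-algebras. -/

theorem stmt15 (K F₁ F₂ : Type u) [Field K]
    [Field F₁] [IsAlgClosed F₁] [Algebra K F₁] [Field F₂] [IsAlgClosed F₂] [Algebra K F₂]
    (A B : Type u)
    [NonUnitalNonAssocRing A] [Module K A] [SMulCommClass K A A] [IsScalarTower K A A]
    [NonUnitalNonAssocRing B] [Module K B] [SMulCommClass K B B] [IsScalarTower K B B]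
    [FiniteDimensional K A] [FiniteDimensional K B] :
    (∃ e : (F₁ ⊗[K] A) ≃ₗ[F₁] (F₁ ⊗[K] B), ∀ x y, e (x * y) = e x * e y) ↔
      ∃ e : (F₂ ⊗[K] A) ≃ₗ[F₂] (F₂ ⊗[K] B), ∀ x y, e (x * y) = e x * e y := by
  by_cases hd : Module.finrank K A = Module.finrank K B
  · let bA := Module.finBasis K A
    let bB := (Module.finBasis K B).reindex (finCongr hd.symm)
    rw [iso_iff_matProp bA bB, iso_iff_matProp bA bB]
    constructor
    · intro h
      exact (matSys_iff _ _ F₂).1 (poly_transfer _ F₁ F₂ ((matSys_iff _ _ F₁).2 h))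
    · intro h
      exact (matSys_iff _ _ F₁).1 (poly_transfer _ F₂ F₁ ((matSys_iff _ _ F₂).2 h))
  · constructor
    · rintro ⟨e, -⟩
      refine absurd ?_ hd
      rw [← Module.finrank_baseChange (R := F₁) (S := K) (M' := A), e.finrank_eq,
        Module.finrank_baseChange]
    · rintro ⟨e, -⟩
      refine absurd ?_ hd
      rw [← Module.finrank_baseChange (R := F₂) (S := K) (M' := A), e.finrank_eq,
        Module.finrank_baseChange]
end

section
/- Let K ⊆ F be a field extension with K algebraically closed, and let A, B be K-algebras of the same dimension ω with |K| > ω. Then A ⊗_K F ≅ B ⊗_K F as F-algebras if and only if A ≅ B as K-algebras. -/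
open TensorProduct Cardinal

set_option synthInstance.maxHeartbeats 1000000
set_option maxHeartbeats 2000000

/-- Every subalgebra of `F` generated by fewer than `#K` elements admits a `K`-algebra
homomorphism to `K`, when `K` is algebraically closed. -/
theorem aux_pi_stmt16 {K F : Type u} [Field K] [IsAlgClosed K] [Field F] [Algebra K F]
    (S : Set F) (hS : #S < #K) :
    Nonempty ((Algebra.adjoin K S) →ₐ[K] K) := by
  classical
  set R := Algebra.adjoin K S with hR
  let ψ : MvPolynomial S K →ₐ[K] R :=
    (Subalgebra.equivOfEq _ R (Algebra.adjoin_eq_range K S).symm).toAlgHom.comp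
      (MvPolynomial.aeval (Subtype.val : S → F)).rangeRestrict
  have hψ : Function.Surjective ψ :=
    by simp only [ψ, AlgHom.coe_comp, AlgEquiv.coe_toAlgHom]
       exact (AlgEquiv.surjective _).comp (AlgHom.rangeRestrict_surjective _)
  obtain ⟨m, hm⟩ := Ideal.exists_maximal R
  letI : Field (R ⧸ m) := Ideal.Quotient.field m
  let θ : MvPolynomial S K →ₐ[K] R ⧸ m := (Ideal.Quotient.mkₐ K m).comp ψ
  have hθ : Function.Surjective θ := Ideal.Quotient.mkₐ_surjective K m |>.comp hψ
  haveI : Algebra.IsAlgebraic K (R ⧸ m) := by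
    by_cases hfin : S.Finite
    · haveI : Finite S := hfin
      have hint := MvPolynomial.comp_C_integral_of_surjective_of_isJacobsonRing
        (θ : MvPolynomial S K →+* (R ⧸ m)) hθ
      have heq : (θ : MvPolynomial S K →+* (R ⧸ m)).comp MvPolynomial.C
          = algebraMap K (R ⧸ m) := by
        ext k
        simpa using θ.commutes k
      rw [heq] at hint
      have : Algebra.IsIntegral K (R ⧸ m) := ⟨fun x => hint x⟩
      exact Algebra.IsIntegral.isAlgebraic
    · haveI : Infinite S := Set.infinite_coe_iff.mpr hfin
      constructor
      intro x
      by_contra hx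
      have htr : Transcendental K x := hx
      have h1 : #K ≤ Module.rank K (R ⧸ m) :=
        htr.linearIndependent_sub_inv.cardinal_le_rank
      have h2 : Module.rank K (R ⧸ m) ≤ Module.rank K (MvPolynomial S K) :=
        LinearMap.rank_le_of_surjective θ.toLinearMap hθ
      rw [MvPolynomial.rank_eq, Cardinal.mk_finsupp_nat] at h2
      have h3 : (#S ⊔ ℵ₀) = #S := by
        simp [Cardinal.aleph0_le_mk S]
      rw [h3] at h2
      exact absurd (h1.trans h2) (not_le.mpr hS)
  haveI : NoZeroSMulDivisors K (R ⧸ m) := inferInstance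
  exact ⟨(IsAlgClosed.lift (R := K) (S := R ⧸ m) (M := K)).comp (Ideal.Quotient.mkₐ K m)⟩

/-- Let `K ⊆ F` be a field extension with `K` algebraically closed, and let `A`, `B`
be (possibly infinite-dimensional, not necessarily associative) `K`-algebras of the same dimension
`ω` with `|K| > ω`. Then `A ⊗_K F ≅ B ⊗_K F` as `F`-algebras iff `A ≅ B` as `K`-algebras. -/
theorem stmt16 (K F : Type u) [Field K] [IsAlgClosed K] [Field F] [Algebra K F]
    (A B : Type u)
    [NonUnitalNonAssocRing A] [Module K A] [SMulCommClass K A A] [IsScalarTower K A A]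
    [NonUnitalNonAssocRing B] [Module K B] [SMulCommClass K B B] [IsScalarTower K B B]
    (ω : Cardinal.{u}) (hA : Module.rank K A = ω) (hB : Module.rank K B = ω)
    (hK : ω < Cardinal.mk K) :
    (∃ e : (F ⊗[K] A) ≃ₗ[F] (F ⊗[K] B), ∀ x y, e (x * y) = e x * e y) ↔
      ∃ f : A ≃ₗ[K] B, ∀ x y, f (x * y) = f x * f y := by
  classical
  constructor
  · rintro ⟨e, he⟩
    -- choose bases
    set I := Module.Free.ChooseBasisIndex K A with hIdef
    set J := Module.Free.ChooseBasisIndex K B with hJdef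
    set 𝒜 : Module.Basis I K A := Module.Free.chooseBasis K A with h𝒜
    set ℬ : Module.Basis J K B := Module.Free.chooseBasis K B with hℬ
    set 𝒜' : Module.Basis I F (F ⊗[K] A) := 𝒜.baseChange F with h𝒜'
    set ℬ' : Module.Basis J F (F ⊗[K] B) := ℬ.baseChange F with hℬ'
    set c : I × J → F := fun q => ℬ'.repr (e (𝒜' q.1)) q.2 with hc
    set d : J × I → F := fun q => 𝒜'.repr (e.symm (ℬ' q.1)) q.2 with hd
    set S : Set F := Set.range c ∪ Set.range d with hSdef
    have hI : #I = ω := by rw [← hA]; exact (Module.Free.rank_eq_card_chooseBasisIndex K A).symm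
    have hJ : #J = ω := by rw [← hB]; exact (Module.Free.rank_eq_card_chooseBasisIndex K B).symm
    -- cardinality bound
    have hS : #S < #K := by
      have h1 : #S ≤ #(I × J) + #(J × I) :=
        (Cardinal.mk_union_le _ _).trans (add_le_add Cardinal.mk_range_le Cardinal.mk_range_le)
      have h2 : #(I × J) = ω * ω := by rw [Cardinal.mk_prod, Cardinal.lift_id, Cardinal.lift_id, hI, hJ]
      have h3 : #(J × I) = ω * ω := by rw [Cardinal.mk_prod, Cardinal.lift_id, Cardinal.lift_id, hI, hJ, mul_comm]
      rw [h2, h3] at h1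
      rcases lt_or_ge ω ℵ₀ with hω | hω
      · have : ω * ω + ω * ω < ℵ₀ :=
          Cardinal.add_lt_aleph0 (Cardinal.mul_lt_aleph0 hω hω) (Cardinal.mul_lt_aleph0 hω hω)
        exact lt_of_le_of_lt h1 (this.trans_le (Cardinal.aleph0_le_mk K))
      · have hmul : ω * ω = ω := Cardinal.mul_eq_self hω
        rw [hmul, Cardinal.add_eq_self hω] at h1
        exact lt_of_le_of_lt h1 hK
    obtain ⟨π⟩ := aux_pi_stmt16 S hS
    set R := Algebra.adjoin K S with hRdef
    have hcR : ∀ q : I × J, c q ∈ R := fun q =>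
      Algebra.subset_adjoin (Set.mem_union_left _ ⟨q, rfl⟩)
    have hdR : ∀ q : J × I, d q ∈ R := fun q =>
      Algebra.subset_adjoin (Set.mem_union_right _ ⟨q, rfl⟩)
    -- a K-linear extension of π to F
    obtain ⟨q, hq⟩ := Submodule.exists_isCompl (Subalgebra.toSubmodule R)
    set p : F →ₗ[K] K :=
      π.toLinearMap ∘ₗ ((Subalgebra.toSubmodule R).linearProjOfIsCompl q hq) with hpdef
    have hp : ∀ (x : F) (hx : x ∈ R), p x = π ⟨x, hx⟩ := fun x hx =>
      congrArg π (Submodule.linearProjOfIsCompl_apply_left hq ⟨x, hx⟩)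
    have hp1 : p 1 = 1 := by
      rw [hp 1 (one_mem R)]
      exact map_one π
    have esmul : ∀ (k : K) (x : F ⊗[K] A), e (k • x) = k • e x := by
      intro k x
      rw [← algebraMap_smul F k x, map_smul, algebraMap_smul]
    have esymmsmul : ∀ (k : K) (x : F ⊗[K] B), e.symm (k • x) = k • e.symm x := by
      intro k x
      rw [← algebraMap_smul F k x, map_smul, algebraMap_smul]
    -- contractions
    set contrA : F ⊗[K] A →ₗ[K] A := TensorProduct.lift ((LinearMap.lsmul K A).comp p) with hcA
    set contrB : F ⊗[K] B →ₗ[K] B := TensorProduct.lift ((LinearMap.lsmul K B).comp p) with hcB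
    have contrA_tmul : ∀ (x : F) (a : A), contrA (x ⊗ₜ[K] a) = p x • a := fun x a => rfl
    have contrB_tmul : ∀ (x : F) (b : B), contrB (x ⊗ₜ[K] b) = p x • b := fun x b => rfl
    -- the R-lattices
    set MA : Submodule K (F ⊗[K] A) :=
      Submodule.span K {u | ∃ x ∈ R, ∃ a : A, u = x ⊗ₜ[K] a} with hMA
    set MB : Submodule K (F ⊗[K] B) :=
      Submodule.span K {u | ∃ x ∈ R, ∃ b : B, u = x ⊗ₜ[K] b} with hMB
    -- membership of images of 1 ⊗ a
    have hB1 : ∀ a : A, e ((1 : F) ⊗ₜ[K] a) ∈ MB := by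
      intro a
      have ha : a ∈ Submodule.span K (Set.range 𝒜) := by rw [𝒜.span_eq]; trivial
      refine Submodule.span_induction ?_ ?_ ?_ ?_ ha
      · rintro x ⟨i, rfl⟩
        have h1 : (1 : F) ⊗ₜ[K] 𝒜 i = 𝒜' i := (Module.Basis.baseChange_apply F 𝒜 i).symm
        rw [h1]
        have h2 : e (𝒜' i)
            = (ℬ'.repr (e (𝒜' i))).sum fun j t => t • ℬ' j := by
          conv_lhs => rw [← ℬ'.linearCombination_repr (e (𝒜' i))]
          rw [Finsupp.linearCombination_apply]
        rw [h2]
        refine Submodule.sum_mem _ fun j hj => ?_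
        have h3 : (ℬ'.repr (e (𝒜' i))) j • ℬ' j = (c (i, j)) ⊗ₜ[K] ℬ j := by
          rw [show ℬ' j = (1 : F) ⊗ₜ[K] ℬ j from Module.Basis.baseChange_apply F ℬ j,
            TensorProduct.smul_tmul', smul_eq_mul, mul_one]
        show (ℬ'.repr (e (𝒜' i))) j • ℬ' j ∈ MB
        rw [h3]
        exact Submodule.subset_span ⟨c (i, j), hcR _, ℬ j, rfl⟩
      · rw [tmul_zero, map_zero]; exact Submodule.zero_mem _
      · intro x y _ _ hx hy
        rw [tmul_add, map_add]; exact Submodule.add_mem _ hx hy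
      · intro k x _ hx
        rw [tmul_smul, esmul]
        exact Submodule.smul_mem _ k hx
    have hA1 : ∀ b : B, e.symm ((1 : F) ⊗ₜ[K] b) ∈ MA := by
      intro b
      have hb : b ∈ Submodule.span K (Set.range ℬ) := by rw [ℬ.span_eq]; trivial
      refine Submodule.span_induction ?_ ?_ ?_ ?_ hb
      · rintro x ⟨j, rfl⟩
        have h1 : (1 : F) ⊗ₜ[K] ℬ j = ℬ' j := (Module.Basis.baseChange_apply F ℬ j).symm
        rw [h1]
        have h2 : e.symm (ℬ' j)
            = (𝒜'.repr (e.symm (ℬ' j))).sum fun i t => t • 𝒜' i := by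
          conv_lhs => rw [← 𝒜'.linearCombination_repr (e.symm (ℬ' j))]
          rw [Finsupp.linearCombination_apply]
        rw [h2]
        refine Submodule.sum_mem _ fun i hi => ?_
        have h3 : (𝒜'.repr (e.symm (ℬ' j))) i • 𝒜' i = (d (j, i)) ⊗ₜ[K] 𝒜 i := by
          rw [show 𝒜' i = (1 : F) ⊗ₜ[K] 𝒜 i from Module.Basis.baseChange_apply F 𝒜 i,
            TensorProduct.smul_tmul', smul_eq_mul, mul_one]
        show (𝒜'.repr (e.symm (ℬ' j))) i • 𝒜' i ∈ MA
        rw [h3]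
        exact Submodule.subset_span ⟨d (j, i), hdR _, 𝒜 i, rfl⟩
      · rw [tmul_zero, map_zero]; exact Submodule.zero_mem _
      · intro x y _ _ hx hy
        rw [tmul_add, map_add]; exact Submodule.add_mem _ hx hy
      · intro k x _ hx
        rw [tmul_smul, esymmsmul]
        exact Submodule.smul_mem _ k hx
    -- contraction interacts with R-scalars
    have hsmulA : ∀ (x : F) (hx : x ∈ R) (v : F ⊗[K] A), v ∈ MA →
        contrA (x • v) = π ⟨x, hx⟩ • contrA v := by
      intro x hx v hv
      refine Submodule.span_induction ?_ ?_ ?_ ?_ hv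
      · rintro u ⟨y, hy, a, rfl⟩
        rw [TensorProduct.smul_tmul', smul_eq_mul, contrA_tmul, contrA_tmul,
          hp _ (mul_mem hx hy), hp _ hy]
        have : (⟨x * y, mul_mem hx hy⟩ : R) = ⟨x, hx⟩ * ⟨y, hy⟩ := rfl
        rw [this, map_mul, mul_smul]
      · simp
      · intro u v _ _ hu hv
        rw [smul_add, map_add, map_add, smul_add, hu, hv]
      · intro k u _ hu
        rw [smul_comm x k u, LinearMap.map_smul, LinearMap.map_smul, hu, smul_comm]
    have hsmulB : ∀ (x : F) (hx : x ∈ R) (v : F ⊗[K] B), v ∈ MB →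
        contrB (x • v) = π ⟨x, hx⟩ • contrB v := by
      intro x hx v hv
      refine Submodule.span_induction ?_ ?_ ?_ ?_ hv
      · rintro u ⟨y, hy, b, rfl⟩
        rw [TensorProduct.smul_tmul', smul_eq_mul, contrB_tmul, contrB_tmul,
          hp _ (mul_mem hx hy), hp _ hy]
        have : (⟨x * y, mul_mem hx hy⟩ : R) = ⟨x, hx⟩ * ⟨y, hy⟩ := rfl
        rw [this, map_mul, mul_smul]
      · simp
      · intro u v _ _ hu hv
        rw [smul_add, map_add, map_add, smul_add, hu, hv]
      · intro k u _ hu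
        rw [smul_comm x k u, LinearMap.map_smul, LinearMap.map_smul, hu, smul_comm]
    -- contraction is multiplicative on MB
    have hmulB : ∀ u ∈ MB, ∀ v ∈ MB, contrB (u * v) = contrB u * contrB v := by
      have step1 : ∀ (x : F), x ∈ R → ∀ (b : B) (v : F ⊗[K] B), v ∈ MB →
          contrB ((x ⊗ₜ[K] b) * v) = contrB (x ⊗ₜ[K] b) * contrB v := by
        intro x hx b v hv
        refine Submodule.span_induction ?_ ?_ ?_ ?_ hv
        · rintro u ⟨y, hy, b', rfl⟩
          rw [Algebra.TensorProduct.tmul_mul_tmul, contrB_tmul, contrB_tmul, contrB_tmul,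
            hp _ (mul_mem hx hy), hp _ hx, hp _ hy]
          have : (⟨x * y, mul_mem hx hy⟩ : R) = ⟨x, hx⟩ * ⟨y, hy⟩ := rfl
          rw [this, map_mul, smul_mul_smul_comm]
        · simp
        · intro u v _ _ hu hv
          rw [mul_add, map_add, map_add, mul_add, hu, hv]
        · intro k u _ hu
          rw [mul_smul_comm, LinearMap.map_smul, LinearMap.map_smul, hu, mul_smul_comm]
      intro u hu v hv
      refine Submodule.span_induction ?_ ?_ ?_ ?_ hu
      · rintro w ⟨x, hx, b, rfl⟩
        exact step1 x hx b v hv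
      · simp
      · intro w w' _ _ hw hw'
        rw [add_mul, map_add, map_add, add_mul, hw, hw']
      · intro k w _ hw
        rw [smul_mul_assoc, LinearMap.map_smul, LinearMap.map_smul, hw, smul_mul_assoc]
    -- the candidate maps
    set f₀ : A →ₗ[K] B :=
      contrB ∘ₗ ((e.restrictScalars K : F ⊗[K] A ≃ₗ[K] F ⊗[K] B) :
        F ⊗[K] A →ₗ[K] F ⊗[K] B) ∘ₗ ((TensorProduct.mk K F A) 1) with hf₀
    set g₀ : B →ₗ[K] A :=
      contrA ∘ₗ ((e.symm.restrictScalars K : F ⊗[K] B ≃ₗ[K] F ⊗[K] A) :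
        F ⊗[K] B →ₗ[K] F ⊗[K] A) ∘ₗ ((TensorProduct.mk K F B) 1) with hg₀
    have hf₀a : ∀ a : A, f₀ a = contrB (e ((1 : F) ⊗ₜ[K] a)) := fun a => rfl
    have hg₀b : ∀ b : B, g₀ b = contrA (e.symm ((1 : F) ⊗ₜ[K] b)) := fun b => rfl
    -- key cancellation claims
    have claimB : ∀ u : F ⊗[K] B, u ∈ MB →
        contrA (e.symm ((1 : F) ⊗ₜ[K] (contrB u))) = contrA (e.symm u) := by
      intro u hu
      refine Submodule.span_induction ?_ ?_ ?_ ?_ hu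
      · rintro w ⟨x, hx, b, rfl⟩
        rw [contrB_tmul]
        have h1 : (1 : F) ⊗ₜ[K] (p x • b) = p x • ((1 : F) ⊗ₜ[K] b) := tmul_smul _ _ _
        rw [h1, esymmsmul, LinearMap.map_smul]
        have h2 : x ⊗ₜ[K] b = x • ((1 : F) ⊗ₜ[K] b) := by
          rw [TensorProduct.smul_tmul', smul_eq_mul, mul_one]
        rw [h2, LinearEquiv.map_smul, hsmulA x hx _ (hA1 b), hp _ hx]
      · simp
      · intro w w' _ _ hw hw'
        rw [map_add, tmul_add, map_add, map_add, map_add, map_add, hw, hw']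
      · intro k w _ hw
        rw [LinearMap.map_smul, tmul_smul, esymmsmul,
          LinearMap.map_smul, esymmsmul, LinearMap.map_smul, hw]
    have claimA : ∀ v : F ⊗[K] A, v ∈ MA →
        contrB (e ((1 : F) ⊗ₜ[K] (contrA v))) = contrB (e v) := by
      intro v hv
      refine Submodule.span_induction ?_ ?_ ?_ ?_ hv
      · rintro w ⟨x, hx, a, rfl⟩
        rw [contrA_tmul]
        have h1 : (1 : F) ⊗ₜ[K] (p x • a) = p x • ((1 : F) ⊗ₜ[K] a) := tmul_smul _ _ _
        rw [h1, esmul, LinearMap.map_smul]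
        have h2 : x ⊗ₜ[K] a = x • ((1 : F) ⊗ₜ[K] a) := by
          rw [TensorProduct.smul_tmul', smul_eq_mul, mul_one]
        rw [h2, LinearEquiv.map_smul, hsmulB x hx _ (hB1 a), hp _ hx]
      · simp
      · intro w w' _ _ hw hw'
        rw [map_add, tmul_add, map_add, map_add, map_add, map_add, hw, hw']
      · intro k w _ hw
        rw [LinearMap.map_smul, tmul_smul, esmul,
          LinearMap.map_smul, esmul, LinearMap.map_smul, hw]
    -- the inverse identities
    have hgf : ∀ a : A, g₀ (f₀ a) = a := by
      intro a
      rw [hf₀a, hg₀b, claimB _ (hB1 a), LinearEquiv.symm_apply_apply, contrA_tmul, hp1, one_smul]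
    have hfg : ∀ b : B, f₀ (g₀ b) = b := by
      intro b
      rw [hg₀b, hf₀a, claimA _ (hA1 b), LinearEquiv.apply_symm_apply, contrB_tmul, hp1, one_smul]
    -- multiplicativity
    have hmulf : ∀ x y : A, f₀ (x * y) = f₀ x * f₀ y := by
      intro x y
      rw [hf₀a, hf₀a, hf₀a]
      have h1 : (1 : F) ⊗ₜ[K] (x * y) = ((1 : F) ⊗ₜ[K] x) * ((1 : F) ⊗ₜ[K] y) := by
        rw [Algebra.TensorProduct.tmul_mul_tmul, one_mul]
      rw [h1, he, hmulB _ (hB1 x) _ (hB1 y)]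
    exact ⟨LinearEquiv.ofLinear f₀ g₀ (LinearMap.ext hfg) (LinearMap.ext hgf), hmulf⟩
  · rintro ⟨f, hf⟩
    refine ⟨LinearEquiv.baseChange K F A B f, ?_⟩
    have htm : ∀ (s : F) (a : A),
        LinearEquiv.baseChange K F A B f (s ⊗ₜ[K] a) = s ⊗ₜ[K] f a := by
      intro s a
      simp [LinearEquiv.baseChange]
    intro x y
    induction x using TensorProduct.induction_on with
    | zero => simp [zero_mul]
    | tmul s a =>
      induction y using TensorProduct.induction_on with
      | zero => simp [mul_zero]
      | tmul t b => rw [Algebra.TensorProduct.tmul_mul_tmul, htm, htm, htm, Algebra.TensorProduct.tmul_mul_tmul, hf]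
      | add u v hu hv => rw [mul_add, map_add, map_add, mul_add, hu, hv]
    | add u v hu hv => rw [add_mul, map_add, map_add, add_mul, hu, hv]
end

section
/- Let F₁, F₂ be fields containing an algebraically closed field K, and let A, B be K-algebras of the same dimension ω with |K| > ω. Then A ⊗_K F₁ ≅ B ⊗_K F₁ as F₁-algebras if and only if A ⊗_K F₂ ≅ B ⊗_K F₂ as F₂-algebras. -/
open TensorProduct

open Cardinal

universe u
set_option linter.unusedSectionVars false
set_option synthInstance.maxHeartbeats 1000000
set_option maxHeartbeats 1000000

lemma stmt17_rank_adjoin_le {K F : Type u} [Field K] [Field F] [Algebra K F] (E : Set F) :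
    Module.rank K (Algebra.adjoin K E) ≤ max ℵ₀ #E := by
  have e1 : Subalgebra.toSubmodule (Algebra.adjoin K E)
      = Submodule.span K (Submonoid.closure E : Set F) := Algebra.adjoin_eq_span K E
  have h1 : Module.rank K (Algebra.adjoin K E)
      ≤ #(Submonoid.closure E : Set F) := by
    have h2 := (LinearEquiv.ofEq _ _ e1).rank_eq
    exact h2.trans_le (rank_span_le _)
  refine h1.trans ?_
  have hsurj : Function.Surjective (fun l : List E =>
      (⟨(l.map Subtype.val).prod, Submonoid.list_prod_mem _ (by
        rintro x hx
        rw [List.mem_map] at hx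
        obtain ⟨y, -, rfl⟩ := hx
        exact Submonoid.subset_closure y.2)⟩ : (Submonoid.closure E : Set F))) := by
    rintro ⟨x, hx⟩
    obtain ⟨L, hL, rfl⟩ := Submonoid.exists_list_of_mem_closure hx
    refine ⟨L.attach.map fun y => ⟨y.1, hL y.1 y.2⟩, ?_⟩
    simp [List.map_map, Function.comp_def]
  refine (mk_le_of_surjective hsurj).trans ?_
  exact (mk_list_le_max _).trans (by simp [max_comm])

lemma stmt17_existsAlgHom {K F : Type u} [Field K] [IsAlgClosed K] [Field F] [Algebra K F]
    (E : Set F) (hE : #E < #K) : Nonempty ((Algebra.adjoin K E) →ₐ[K] K) := by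
  set R := Algebra.adjoin K E with hR
  haveI : Nontrivial R := ⟨1, 0, fun h => one_ne_zero (congrArg Subtype.val h)⟩
  obtain ⟨m, hm⟩ := Ideal.exists_maximal R
  haveI := hm
  letI : Field (R ⧸ m) := Ideal.Quotient.field m
  haveI halg : Algebra.IsIntegral K (R ⧸ m) := by
    by_cases hfin : E.Finite
    · haveI : Algebra.FiniteType K R := by
        rw [← Subalgebra.fg_iff_finiteType]
        exact ⟨hfin.toFinset, by simp [hR]⟩
      haveI : Algebra.FiniteType K (R ⧸ m) :=
        Algebra.FiniteType.of_surjective (Ideal.Quotient.mkₐ K m)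
          (Ideal.Quotient.mkₐ_surjective K m)
      haveI := finite_of_finite_type_of_isJacobsonRing K (R ⧸ m)
      exact Algebra.IsIntegral.of_finite K _
    · have hEinf : ℵ₀ ≤ #E := aleph0_le_mk_iff.2 (Set.infinite_coe_iff.2 hfin)
      have h1 : Module.rank K R ≤ max ℵ₀ #E := stmt17_rank_adjoin_le E
      have h2 : Module.rank K (R ⧸ m) ≤ Module.rank K R :=
        (Ideal.Quotient.mkₐ K m).toLinearMap.rank_le_of_surjective
          (Ideal.Quotient.mkₐ_surjective K m)
      have h3 : Module.rank K (R ⧸ m) < #K := by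
        refine (h2.trans h1).trans_lt ?_
        rw [max_eq_right hEinf]
        exact hE
      haveI : Algebra.IsAlgebraic K (R ⧸ m) := by
        by_contra h
        rw [← Algebra.transcendental_iff_not_isAlgebraic] at h
        obtain ⟨x, hx⟩ := h
        exact absurd (hx.linearIndependent_sub_inv.cardinal_le_rank) (not_le.2 h3)
      exact Algebra.IsAlgebraic.isIntegral
  have hinj : Function.Injective (algebraMap K (R ⧸ m)) := (algebraMap K (R ⧸ m)).injective
  have hsurj : Function.Surjective (algebraMap K (R ⧸ m)) :=
    IsAlgClosed.algebraMap_bijective_of_isIntegral.2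
  let ψ : K ≃ₐ[K] (R ⧸ m) := AlgEquiv.ofBijective (Algebra.ofId K (R ⧸ m)) ⟨hinj, hsurj⟩
  exact ⟨(ψ.symm.toAlgHom).comp (Ideal.Quotient.mkₐ K m)⟩


section Psi
variable {K F : Type u} [Field K] [Field F] [Algebra K F]
variable {B : Type u} [NonUnitalNonAssocRing B] [Module K B] [SMulCommClass K B B]
  [IsScalarTower K B B]
variable {ι : Type u} (b : Module.Basis ι K B) (R : Subalgebra K F) (φ : R →ₐ[K] K)

open scoped Classical in
/-- specialization -/
noncomputable def stmt17p0 : F → K := fun z => if h : z ∈ R then φ ⟨z, h⟩ else 0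

lemma stmt17p0_zero : stmt17p0 R φ 0 = 0 := by
  rw [stmt17p0]
  rw [dif_pos (zero_mem R)]
  exact map_zero φ

lemma stmt17p0_of_mem {z : F} (h : z ∈ R) : stmt17p0 R φ z = φ ⟨z, h⟩ := by
  rw [stmt17p0, dif_pos h]

lemma stmt17p0_add {u v : F} (hu : u ∈ R) (hv : v ∈ R) :
    stmt17p0 R φ (u + v) = stmt17p0 R φ u + stmt17p0 R φ v := by
  rw [stmt17p0_of_mem R φ hu, stmt17p0_of_mem R φ hv, stmt17p0_of_mem R φ (add_mem hu hv),
    ← map_add]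
  rfl

lemma stmt17p0_mul {u v : F} (hu : u ∈ R) (hv : v ∈ R) :
    stmt17p0 R φ (u * v) = stmt17p0 R φ u * stmt17p0 R φ v := by
  rw [stmt17p0_of_mem R φ hu, stmt17p0_of_mem R φ hv, stmt17p0_of_mem R φ (mul_mem hu hv),
    ← map_mul]
  rfl

lemma stmt17p0_algebraMap (k : K) : stmt17p0 R φ (algebraMap K F k) = k := by
  rw [stmt17p0_of_mem R φ (R.algebraMap_mem k)]
  have : (⟨algebraMap K F k, R.algebraMap_mem k⟩ : R) = algebraMap K R k := rfl
  rw [this, AlgHom.commutes]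
  simp

/-- the submodule of tensors with coefficients in `R` -/
noncomputable def stmt17Q : Submodule K (F ⊗[K] B) where
  carrier := {w | ∀ j, (b.baseChange F).repr w j ∈ R}
  add_mem' := fun hu hv j => by
    rw [map_add, Finsupp.add_apply]; exact add_mem (hu j) (hv j)
  zero_mem' := fun j => by rw [map_zero, Finsupp.zero_apply]; exact zero_mem R
  smul_mem' := fun k w hw j => by
    rw [← algebraMap_smul F k w, map_smul, Finsupp.smul_apply, smul_eq_mul]
    exact mul_mem (R.algebraMap_mem k) (hw j)

lemma stmt17Q_mem_iff {w : F ⊗[K] B} :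
    w ∈ stmt17Q b R ↔ ∀ j, (b.baseChange F).repr w j ∈ R := Iff.rfl

/-- the specialized element -/
noncomputable def stmt17Psi : F ⊗[K] B → B := fun w =>
  b.repr.symm (Finsupp.mapRange (stmt17p0 R φ) (stmt17p0_zero R φ) ((b.baseChange F).repr w))

lemma stmt17Psi_zero : stmt17Psi b R φ 0 = 0 := by
  rw [stmt17Psi, map_zero]
  simp

lemma stmt17Psi_add {w₁ w₂ : F ⊗[K] B} (h₁ : w₁ ∈ stmt17Q b R) (h₂ : w₂ ∈ stmt17Q b R) :
    stmt17Psi b R φ (w₁ + w₂) = stmt17Psi b R φ w₁ + stmt17Psi b R φ w₂ := by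
  simp only [stmt17Psi]
  rw [← map_add]
  congr 1
  ext j
  simp only [map_add, Finsupp.mapRange_apply, Finsupp.add_apply]
  exact stmt17p0_add R φ (h₁ j) (h₂ j)

lemma stmt17_smul_mem_Q {r : F} (hr : r ∈ R) {w : F ⊗[K] B} (hw : w ∈ stmt17Q b R) :
    r • w ∈ stmt17Q b R := by
  intro j
  rw [map_smul, Finsupp.smul_apply, smul_eq_mul]
  exact mul_mem hr (hw j)

lemma stmt17Psi_rsmul {r : F} (hr : r ∈ R) {w : F ⊗[K] B} (hw : w ∈ stmt17Q b R) :
    stmt17Psi b R φ (r • w) = stmt17p0 R φ r • stmt17Psi b R φ w := by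
  simp only [stmt17Psi]
  rw [← map_smul]
  congr 1
  ext j
  simp only [map_smul, Finsupp.mapRange_apply, Finsupp.smul_apply, smul_eq_mul]
  exact stmt17p0_mul R φ hr (hw j)

lemma stmt17Psi_ksmul (k : K) {w : F ⊗[K] B} (h : w ∈ stmt17Q b R) :
    stmt17Psi b R φ (k • w) = k • stmt17Psi b R φ w := by
  rw [← algebraMap_smul F k w, stmt17Psi_rsmul b R φ (R.algebraMap_mem k) h,
    stmt17p0_algebraMap]

lemma stmt17_one_tmul_mem_Q (x : B) : (1 : F) ⊗ₜ[K] x ∈ stmt17Q b R := by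
  intro j
  rw [Module.Basis.baseChange_repr_tmul, Algebra.smul_def, mul_one]
  exact R.algebraMap_mem _

lemma stmt17Psi_one_tmul (x : B) : stmt17Psi b R φ ((1 : F) ⊗ₜ[K] x) = x := by
  rw [stmt17Psi]
  have : Finsupp.mapRange (stmt17p0 R φ) (stmt17p0_zero R φ)
      ((b.baseChange F).repr ((1 : F) ⊗ₜ[K] x)) = b.repr x := by
    ext j
    rw [Finsupp.mapRange_apply, Module.Basis.baseChange_repr_tmul, Algebra.smul_def, mul_one,
      stmt17p0_algebraMap]
  rw [this, LinearEquiv.symm_apply_apply]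

/-- generating set -/
def stmt17S : Set (F ⊗[K] B) := {w | ∃ r ∈ R, ∃ j, w = r • ((1 : F) ⊗ₜ[K] b j)}

lemma stmt17_span_S_le : Submodule.span K (stmt17S b R) ≤ stmt17Q b R := by
  rw [Submodule.span_le]
  rintro w ⟨r, hr, j, rfl⟩
  exact stmt17_smul_mem_Q b R hr (stmt17_one_tmul_mem_Q b R _)

lemma stmt17_mem_span_S {w : F ⊗[K] B} (hw : w ∈ stmt17Q b R) :
    w ∈ Submodule.span K (stmt17S b R) := by
  have hrepr := Module.Basis.linearCombination_repr (b.baseChange F) w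
  rw [Finsupp.linearCombination_apply] at hrepr
  rw [← hrepr]
  refine Submodule.sum_mem _ fun j hj => ?_
  refine Submodule.subset_span ?_
  exact ⟨(b.baseChange F).repr w j, (stmt17Q_mem_iff b R).1 hw j, j,
    by simp [Module.Basis.baseChange_apply]⟩

lemma stmt17Psi_mul {w₁ w₂ : F ⊗[K] B} (h₁ : w₁ ∈ stmt17Q b R) (h₂ : w₂ ∈ stmt17Q b R) :
    w₁ * w₂ ∈ stmt17Q b R ∧
      stmt17Psi b R φ (w₁ * w₂) = stmt17Psi b R φ w₁ * stmt17Psi b R φ w₂ := by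
  have hQ := stmt17_span_S_le b R
  have main : ∀ w₁, w₁ ∈ Submodule.span K (stmt17S b R) →
      ∀ w₂, w₂ ∈ Submodule.span K (stmt17S b R) →
      (w₁ * w₂ ∈ stmt17Q b R ∧
        stmt17Psi b R φ (w₁ * w₂) = stmt17Psi b R φ w₁ * stmt17Psi b R φ w₂) := by
    intro w₁ h₁
    induction h₁ using Submodule.span_induction with
    | mem x hx =>
      intro w₂ h₂
      induction h₂ using Submodule.span_induction with
      | mem y hy =>
        obtain ⟨r, hr, i, rfl⟩ := hx
        obtain ⟨s, hs, j, rfl⟩ := hy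
        have key : (r • ((1 : F) ⊗ₜ[K] b i)) * (s • ((1 : F) ⊗ₜ[K] b j))
            = (r * s) • ((1 : F) ⊗ₜ[K] (b i * b j)) := by
          rw [smul_mul_assoc, mul_smul_comm, smul_smul, Algebra.TensorProduct.tmul_mul_tmul,
            one_mul]
        constructor
        · rw [key]
          exact stmt17_smul_mem_Q b R (mul_mem hr hs) (stmt17_one_tmul_mem_Q b R _)
        · rw [key, stmt17Psi_rsmul b R φ (mul_mem hr hs) (stmt17_one_tmul_mem_Q b R _),
            stmt17Psi_one_tmul, stmt17p0_mul R φ hr hs,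
            stmt17Psi_rsmul b R φ hr (stmt17_one_tmul_mem_Q b R _),
            stmt17Psi_rsmul b R φ hs (stmt17_one_tmul_mem_Q b R _),
            stmt17Psi_one_tmul, stmt17Psi_one_tmul, smul_mul_assoc, mul_smul_comm, smul_smul]
      | zero =>
        constructor
        · rw [mul_zero]; exact Submodule.zero_mem _
        · rw [mul_zero, stmt17Psi_zero b R φ, mul_zero]
      | add y z hy hz IHy IHz =>
        constructor
        · rw [mul_add]; exact Submodule.add_mem _ IHy.1 IHz.1
        · rw [mul_add, stmt17Psi_add b R φ IHy.1 IHz.1, IHy.2, IHz.2,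
            stmt17Psi_add b R φ (hQ hy) (hQ hz), mul_add]
      | smul k y hy IH =>
        constructor
        · rw [mul_smul_comm]; exact Submodule.smul_mem _ k IH.1
        · rw [mul_smul_comm, stmt17Psi_ksmul b R φ k IH.1, IH.2,
            stmt17Psi_ksmul b R φ k (hQ hy), mul_smul_comm]
    | zero =>
      intro w₂ h₂
      constructor
      · rw [zero_mul]; exact Submodule.zero_mem _
      · rw [zero_mul, stmt17Psi_zero b R φ, zero_mul]
    | add x y hx hy IHx IHy =>
      intro w₂ h₂
      constructor
      · rw [add_mul]; exact Submodule.add_mem _ ((IHx w₂ h₂).1) ((IHy w₂ h₂).1)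
      · rw [add_mul, stmt17Psi_add b R φ (IHx w₂ h₂).1 (IHy w₂ h₂).1, (IHx w₂ h₂).2,
          (IHy w₂ h₂).2, stmt17Psi_add b R φ (hQ hx) (hQ hy), add_mul]
    | smul k x hx IH =>
      intro w₂ h₂
      constructor
      · rw [smul_mul_assoc]; exact Submodule.smul_mem _ k (IH w₂ h₂).1
      · rw [smul_mul_assoc, stmt17Psi_ksmul b R φ k (IH w₂ h₂).1, (IH w₂ h₂).2,
          stmt17Psi_ksmul b R φ k (hQ hx), smul_mul_assoc]
  exact main w₁ (stmt17_mem_span_S b R h₁) w₂ (stmt17_mem_span_S b R h₂)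
end Psi
section Transfer
variable {K F : Type u} [Field K] [Field F] [Algebra K F]
variable {A : Type u} [NonUnitalNonAssocRing A] [Module K A] [SMulCommClass K A A]
  [IsScalarTower K A A]
variable {B : Type u} [NonUnitalNonAssocRing B] [Module K B] [SMulCommClass K B B]
  [IsScalarTower K B B]

lemma stmt17_transfer (g : A ≃ₗ[K] B) (hg : ∀ x y, g (x * y) = g x * g y) :
    ∃ e : (F ⊗[K] A) ≃ₗ[F] (F ⊗[K] B), ∀ x y, e (x * y) = e x * e y := by
  refine ⟨LinearEquiv.baseChange K F A B g, ?_⟩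
  have happ : ∀ (s : F) (a : A), LinearEquiv.baseChange K F A B g (s ⊗ₜ a) = s ⊗ₜ g a :=
    fun s a => rfl
  intro x y
  induction x using TensorProduct.induction_on with
  | zero => rw [zero_mul, map_zero, zero_mul]
  | tmul s a =>
    induction y using TensorProduct.induction_on with
    | zero => rw [mul_zero, map_zero, mul_zero]
    | tmul t c =>
      rw [Algebra.TensorProduct.tmul_mul_tmul, happ, happ, happ,
        Algebra.TensorProduct.tmul_mul_tmul, hg]
    | add u v hu hv => rw [mul_add, map_add, hu, hv, map_add, mul_add]
  | add u v hu hv => rw [add_mul, map_add, hu, hv, map_add, add_mul]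
end Transfer

section Comp
variable {K F : Type u} [Field K] [Field F] [Algebra K F]
variable {A : Type u} [NonUnitalNonAssocRing A] [Module K A] [SMulCommClass K A A]
  [IsScalarTower K A A]
variable {B : Type u} [NonUnitalNonAssocRing B] [Module K B] [SMulCommClass K B B]
  [IsScalarTower K B B]
variable {ιA ιB : Type u} (bA : Module.Basis ιA K A) (bB : Module.Basis ιB K B)
variable (R : Subalgebra K F) (φ : R →ₐ[K] K)

lemma stmt17_comp (e : (F ⊗[K] A) ≃ₗ[F] (F ⊗[K] B))
    (hQA : ∀ y : B, e.symm ((1 : F) ⊗ₜ[K] y) ∈ stmt17Q bA R) :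
    ∀ w ∈ stmt17Q bB R, e.symm w ∈ stmt17Q bA R ∧
      stmt17Psi bA R φ (e.symm ((1 : F) ⊗ₜ[K] (stmt17Psi bB R φ w)))
        = stmt17Psi bA R φ (e.symm w) := by
  set g0 : B → A := fun y => stmt17Psi bA R φ (e.symm ((1 : F) ⊗ₜ[K] y)) with hg0
  have g0_add : ∀ y z, g0 (y + z) = g0 y + g0 z := by
    intro y z
    show stmt17Psi bA R φ (e.symm ((1 : F) ⊗ₜ[K] (y + z))) = _
    rw [tmul_add, map_add, stmt17Psi_add bA R φ (hQA y) (hQA z)]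
  have g0_ksmul : ∀ (k : K) y, g0 (k • y) = k • g0 y := by
    intro k y
    show stmt17Psi bA R φ (e.symm ((1 : F) ⊗ₜ[K] (k • y))) = _
    rw [tmul_smul, ← algebraMap_smul F k ((1 : F) ⊗ₜ[K] y), map_smul,
      stmt17Psi_rsmul bA R φ (R.algebraMap_mem k) (hQA y), stmt17p0_algebraMap]
  have g0_zero : g0 0 = 0 := by
    show stmt17Psi bA R φ (e.symm ((1 : F) ⊗ₜ[K] (0 : B))) = 0
    rw [tmul_zero, map_zero, stmt17Psi_zero]
  have hSle := stmt17_span_S_le bB R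
  intro w hw
  have hws := stmt17_mem_span_S bB R hw
  induction hws using Submodule.span_induction with
  | mem x hx =>
    obtain ⟨r, hr, j, rfl⟩ := hx
    have h1 : e.symm (r • ((1 : F) ⊗ₜ[K] bB j)) = r • e.symm ((1 : F) ⊗ₜ[K] bB j) :=
      map_smul _ _ _
    constructor
    · rw [h1]
      exact stmt17_smul_mem_Q bA R hr (hQA (bB j))
    · rw [stmt17Psi_rsmul bB R φ hr (stmt17_one_tmul_mem_Q bB R _), stmt17Psi_one_tmul]
      show g0 _ = _
      rw [g0_ksmul, h1, stmt17Psi_rsmul bA R φ hr (hQA (bB j))]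
  | zero =>
    constructor
    · rw [map_zero]; exact Submodule.zero_mem _
    · rw [map_zero, stmt17Psi_zero bB R φ, stmt17Psi_zero bA R φ]
      exact g0_zero
  | add x y hx hy IHx IHy =>
    constructor
    · rw [map_add]; exact Submodule.add_mem _ (IHx (hSle hx)).1 (IHy (hSle hy)).1
    · rw [stmt17Psi_add bB R φ (hSle hx) (hSle hy), tmul_add, map_add,
        stmt17Psi_add bA R φ (hQA _) (hQA _), (IHx (hSle hx)).2, (IHy (hSle hy)).2, map_add,
        stmt17Psi_add bA R φ (IHx (hSle hx)).1 (IHy (hSle hy)).1]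
  | smul k x hx IH =>
    have h2 : e.symm (k • x) = k • e.symm x := by
      rw [← algebraMap_smul F k x, map_smul, algebraMap_smul]
    constructor
    · rw [h2]; exact Submodule.smul_mem _ k (IH (hSle hx)).1
    · rw [stmt17Psi_ksmul bB R φ k (hSle hx), tmul_smul,
        ← algebraMap_smul F k ((1 : F) ⊗ₜ[K] (stmt17Psi bB R φ x)), map_smul,
        stmt17Psi_rsmul bA R φ (R.algebraMap_mem k) (hQA _), stmt17p0_algebraMap, (IH (hSle hx)).2, h2,
        stmt17Psi_ksmul bA R φ k (IH (hSle hx)).1]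
end Comp

section Descent
variable {K F : Type u} [Field K] [IsAlgClosed K] [Field F] [Algebra K F]
variable {A : Type u} [NonUnitalNonAssocRing A] [Module K A] [SMulCommClass K A A]
  [IsScalarTower K A A]
variable {B : Type u} [NonUnitalNonAssocRing B] [Module K B] [SMulCommClass K B B]
  [IsScalarTower K B B]

lemma stmt17_descent (hA : Module.rank K A < #K) (hB : Module.rank K B < #K)
    (e : (F ⊗[K] A) ≃ₗ[F] (F ⊗[K] B)) (he : ∀ x y, e (x * y) = e x * e y) :
    ∃ g : A ≃ₗ[K] B, ∀ x y, g (x * y) = g x * g y := by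
  classical
  set bA := Module.Basis.ofVectorSpace K A with hbA
  set bB := Module.Basis.ofVectorSpace K B with hbB
  set E : Set F :=
    (Set.range fun p : (Module.Basis.ofVectorSpaceIndex K A) × (Module.Basis.ofVectorSpaceIndex K B) =>
      (bB.baseChange F).repr (e ((1 : F) ⊗ₜ[K] (bA p.1))) p.2) ∪
    (Set.range fun p : (Module.Basis.ofVectorSpaceIndex K B) × (Module.Basis.ofVectorSpaceIndex K A) =>
      (bA.baseChange F).repr (e.symm ((1 : F) ⊗ₜ[K] (bB p.1))) p.2) with hE
  have hK0 : ℵ₀ ≤ #K := aleph0_le_mk K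
  have hιA : #(Module.Basis.ofVectorSpaceIndex K A) < #K := by
    rw [Module.Basis.mk_eq_rank'' bA]; exact hA
  have hιB : #(Module.Basis.ofVectorSpaceIndex K B) < #K := by
    rw [Module.Basis.mk_eq_rank'' bB]; exact hB
  have hEcard : #E < #K := by
    refine ((mk_union_le _ _).trans
      (add_le_add mk_range_le mk_range_le)).trans_lt ?_
    refine add_lt_of_lt hK0 ?_ ?_ <;>
      rw [mk_prod, lift_id, lift_id] <;>
      [exact mul_lt_of_lt hK0 hιA hιB; exact mul_lt_of_lt hK0 hιB hιA]
  obtain ⟨φ⟩ := stmt17_existsAlgHom E hEcard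
  set R := Algebra.adjoin K E with hRdef
  have hEsub : E ⊆ (R : Set F) := Algebra.subset_adjoin
  have hQB0 : ∀ i : Module.Basis.ofVectorSpaceIndex K A,
      e ((1 : F) ⊗ₜ[K] (bA i)) ∈ stmt17Q bB R := by
    intro i j
    exact hEsub (Or.inl ⟨(i, j), rfl⟩)
  have hQA0 : ∀ j : Module.Basis.ofVectorSpaceIndex K B,
      e.symm ((1 : F) ⊗ₜ[K] (bB j)) ∈ stmt17Q bA R := by
    intro j i
    exact hEsub (Or.inr ⟨(j, i), rfl⟩)
  -- extend to all elements
  have hQB : ∀ x : A, e ((1 : F) ⊗ₜ[K] x) ∈ stmt17Q bB R := by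
    have hsub : Submodule.span K (Set.range (bA : _ → A)) ≤
        Submodule.comap ((e.restrictScalars K).toLinearMap.comp
          ((TensorProduct.mk K F A) 1)) (stmt17Q bB R) := by
      rw [Submodule.span_le]
      rintro _ ⟨i, rfl⟩
      exact hQB0 i
    intro x
    have : x ∈ Submodule.span K (Set.range (bA : _ → A)) := by
      rw [Module.Basis.span_eq]; trivial
    exact hsub this
  have hQA : ∀ y : B, e.symm ((1 : F) ⊗ₜ[K] y) ∈ stmt17Q bA R := by
    have hsub : Submodule.span K (Set.range (bB : _ → B)) ≤
        Submodule.comap ((e.symm.restrictScalars K).toLinearMap.comp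
          ((TensorProduct.mk K F B) 1)) (stmt17Q bA R) := by
      rw [Submodule.span_le]
      rintro _ ⟨j, rfl⟩
      exact hQA0 j
    intro y
    have : y ∈ Submodule.span K (Set.range (bB : _ → B)) := by
      rw [Module.Basis.span_eq]; trivial
    exact hsub this
  -- the K-linear maps
  let f : A →ₗ[K] B :=
    { toFun := fun x => stmt17Psi bB R φ (e ((1 : F) ⊗ₜ[K] x))
      map_add' := fun x y => by
        rw [tmul_add, map_add, stmt17Psi_add bB R φ (hQB x) (hQB y)]
      map_smul' := fun k x => by
        simp only [RingHom.id_apply]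
        rw [tmul_smul, ← algebraMap_smul F k ((1 : F) ⊗ₜ[K] x), map_smul,
          stmt17Psi_rsmul bB R φ (R.algebraMap_mem k) (hQB x), stmt17p0_algebraMap] }
  let g : B →ₗ[K] A :=
    { toFun := fun y => stmt17Psi bA R φ (e.symm ((1 : F) ⊗ₜ[K] y))
      map_add' := fun x y => by
        rw [tmul_add, map_add, stmt17Psi_add bA R φ (hQA x) (hQA y)]
      map_smul' := fun k y => by
        simp only [RingHom.id_apply]
        rw [tmul_smul, ← algebraMap_smul F k ((1 : F) ⊗ₜ[K] y), map_smul,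
          stmt17Psi_rsmul bA R φ (R.algebraMap_mem k) (hQA y), stmt17p0_algebraMap] }
  -- inverse identities
  have hgf : ∀ x : A, g (f x) = x := by
    intro x
    have h := (stmt17_comp bA bB R φ e hQA _ (hQB x)).2
    show stmt17Psi bA R φ (e.symm ((1 : F) ⊗ₜ[K] stmt17Psi bB R φ (e ((1 : F) ⊗ₜ[K] x)))) = x
    rw [h, LinearEquiv.symm_apply_apply, stmt17Psi_one_tmul]
  have hfg : ∀ y : B, f (g y) = y := by
    intro y
    have h := (stmt17_comp bB bA R φ e.symm (by simpa using hQB) _ (hQA y)).2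
    simp only [LinearEquiv.symm_symm] at h
    show stmt17Psi bB R φ (e ((1 : F) ⊗ₜ[K] stmt17Psi bA R φ (e.symm ((1 : F) ⊗ₜ[K] y)))) = y
    rw [h, LinearEquiv.apply_symm_apply, stmt17Psi_one_tmul]
  refine ⟨LinearEquiv.ofLinear f g (LinearMap.ext hfg) (LinearMap.ext hgf), ?_⟩
  intro x y
  show stmt17Psi bB R φ (e ((1 : F) ⊗ₜ[K] (x * y))) = _
  have h1 : (1 : F) ⊗ₜ[K] (x * y) = ((1 : F) ⊗ₜ[K] x) * ((1 : F) ⊗ₜ[K] y) := by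
    rw [Algebra.TensorProduct.tmul_mul_tmul, one_mul]
  rw [h1, he, (stmt17Psi_mul bB R φ (hQB x) (hQB y)).2]
  rfl
end Descent


/-- Let `F₁`, `F₂` be fields containing an algebraically closed field `K`, and let
`A`, `B` be `K`-algebras of the same dimension `ω` with `|K| > ω`. Then
`A ⊗_K F₁ ≅ B ⊗_K F₁` as `F₁`-algebras iff `A ⊗_K F₂ ≅ B ⊗_K F₂` as `F₂`-algebras. -/
theorem stmt17 (K F₁ F₂ : Type u) [Field K] [IsAlgClosed K]
    [Field F₁] [Algebra K F₁] [Field F₂] [Algebra K F₂]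
    (A B : Type u)
    [NonUnitalNonAssocRing A] [Module K A] [SMulCommClass K A A] [IsScalarTower K A A]
    [NonUnitalNonAssocRing B] [Module K B] [SMulCommClass K B B] [IsScalarTower K B B]
    (ω : Cardinal.{u}) (hA : Module.rank K A = ω) (hB : Module.rank K B = ω)
    (hK : ω < Cardinal.mk K) :
    (∃ e : (F₁ ⊗[K] A) ≃ₗ[F₁] (F₁ ⊗[K] B), ∀ x y, e (x * y) = e x * e y) ↔
      ∃ e : (F₂ ⊗[K] A) ≃ₗ[F₂] (F₂ ⊗[K] B), ∀ x y, e (x * y) = e x * e y := by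
  have hA' : Module.rank K A < Cardinal.mk K := by rw [hA]; exact hK
  have hB' : Module.rank K B < Cardinal.mk K := by rw [hB]; exact hK
  constructor
  · rintro ⟨e, he⟩
    obtain ⟨g, hg⟩ := stmt17_descent hA' hB' e he
    exact stmt17_transfer g hg
  · rintro ⟨e, he⟩
    obtain ⟨g, hg⟩ := stmt17_descent hA' hB' e he
    exact stmt17_transfer g hg
end
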